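/- arXiv:1604.05510 — 5 statements merged into one kernel-verified Lean document; each statement's English description precedes it below -/
import Mathlib

section
/- For every finite directed acyclic graph G with a unique sink, the visiting reversible pebbling number and the persistent reversible pebbling number satisfy vrev(G) ≤ rev(G) ≤ vrev(G) + 1. -/
/-- A finite directed graph with a designated root vertex, given by its
adjacency (edge) relation `adj u v`, meaning a directed edge from `u` to `v`. -/
structure DagSys (V : Type) where
  adj : V → V → Prop
  root : V

/-- `G` is a rooted DAG: acyclic (no directed cycle through any vertex) and
the root is its unique sink (a vertex is without out-edges iff it is the root). -/
def IsRootedDAG {V : Type} [Fintype V] (G : DagSys V) : Prop :=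
  (∀ v : V, ¬ Relation.TransGen G.adj v v) ∧
  (∀ v : V, (∀ w : V, ¬ G.adj v w) ↔ v = G.root)

/-- One legal move of the reversible pebble game on a DAG. -/
def DagPebStep {V : Type} [DecidableEq V] (G : DagSys V) (P Q : Finset V) : Prop :=
  ∃ v : V, ((v ∉ P ∧ Q = insert v P) ∨ (v ∉ Q ∧ P = insert v Q)) ∧
    ∀ u : V, G.adj u v → u ∈ P

/-- A persistent reversible pebbling of a DAG. -/
def IsDagPebbling {V : Type} [DecidableEq V] (G : DagSys V) (L : List (Finset V)) : Prop :=
  L.head? = some ∅ ∧ L.getLast? = some {G.root} ∧ L.Chain' (DagPebStep G)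

/-- A visiting reversible pebbling of a DAG. -/
def IsDagVisPebbling {V : Type} [DecidableEq V] (G : DagSys V) (L : List (Finset V)) : Prop :=
  L.head? = some ∅ ∧ L.getLast? = some ∅ ∧ (∃ P ∈ L, G.root ∈ P) ∧ L.Chain' (DagPebStep G)

/-- The space of a pebbling: the maximum number of pebbles in any configuration. -/
def dagPebSpace {V : Type} (L : List (Finset V)) : ℕ := (L.map Finset.card).foldr max 0

/-- The persistent reversible pebbling number `rev` of a DAG. -/
noncomputable def dagRevNum {V : Type} [DecidableEq V] (G : DagSys V) : ℕ :=
  sInf {k | ∃ L : List (Finset V), IsDagPebbling G L ∧ dagPebSpace L ≤ k}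

/-- The visiting reversible pebbling number `vrev` of a DAG. -/
noncomputable def dagVrevNum {V : Type} [DecidableEq V] (G : DagSys V) : ℕ :=
  sInf {k | ∃ L : List (Finset V), IsDagVisPebbling G L ∧ dagPebSpace L ≤ k}

section Aux

variable {V : Type} [Fintype V] [DecidableEq V]

lemma dagPebSpace_le_iff {L : List (Finset V)} {k : ℕ} :
    dagPebSpace L ≤ k ↔ ∀ P ∈ L, P.card ≤ k := by
  induction L with
  | nil => simp [dagPebSpace]
  | cons a t ih =>
    simp only [dagPebSpace, List.map_cons, List.foldr_cons] at *
    rw [Nat.max_le, ih, List.forall_mem_cons]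

lemma dagStep_symm (G : DagSys V) (hG : IsRootedDAG G) {P Q : Finset V}
    (h : DagPebStep G P Q) : DagPebStep G Q P := by
  obtain ⟨v, hv | hv, hpred⟩ := h
  · exact ⟨v, Or.inr hv, fun u hu => hv.2 ▸ Finset.mem_insert_of_mem (hpred u hu)⟩
  · refine ⟨v, Or.inl hv, fun u hu => ?_⟩
    have huv : u ≠ v := by
      rintro rfl
      exact hG.1 _ (Relation.TransGen.single hu)
    have := hpred u hu
    rw [hv.2, Finset.mem_insert] at this
    exact this.resolve_left huv

lemma dagStep_insert_root (G : DagSys V) {P Q : Finset V}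
    (h : DagPebStep G P Q) :
    insert G.root P = insert G.root Q ∨
      DagPebStep G (insert G.root P) (insert G.root Q) := by
  obtain ⟨v, hv | hv, hpred⟩ := h
  · by_cases hvr : v = G.root
    · subst hvr
      exact Or.inl (by rw [hv.2, Finset.insert_idem])
    · refine Or.inr ⟨v, Or.inl ⟨?_, ?_⟩, fun u hu => Finset.mem_insert_of_mem (hpred u hu)⟩
      · simp [Finset.mem_insert, hvr, hv.1]
      · rw [hv.2, Finset.insert_comm]
  · by_cases hvr : v = G.root
    · subst hvr
      exact Or.inl (by rw [hv.2, Finset.insert_idem])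
    · refine Or.inr ⟨v, Or.inr ⟨?_, ?_⟩, fun u hu => Finset.mem_insert_of_mem (hpred u hu)⟩
      · simp [Finset.mem_insert, hvr, hv.1]
      · rw [hv.2, Finset.insert_comm]

/-- Removing stuttering from an "equality-or-step" chain. -/
lemma dagCompress {α : Type*} {R : α → α → Prop} :
    ∀ (M : List α), M.Chain' (fun a b => a = b ∨ R a b) → M ≠ [] →
      ∃ M' : List α, M'.Chain' R ∧ M'.head? = M.head? ∧
        M'.getLast? = M.getLast? ∧ (∀ x, x ∈ M' ↔ x ∈ M)
  | [], _, h => absurd rfl h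
  | [a], _, _ => ⟨[a], by simp [List.Chain']⟩
  | a :: b :: t, h, _ => by
    rw [List.Chain', List.isChain_cons_cons] at h
    obtain ⟨M', h1, h2, h3, h4⟩ := dagCompress (b :: t) h.2 (by simp)
    rcases h.1 with hab | hab
    · refine ⟨M', h1, ?_, ?_, fun x => ?_⟩
      · rw [h2]
        simp [hab]
      · rw [h3, List.getLast?_cons_cons]
      · rw [h4]
        simp only [List.mem_cons]
        rw [hab]
        tauto
    · obtain ⟨c, M'', rfl⟩ : ∃ c M'', M' = c :: M'' := by
        cases M' with
        | nil => simp at h2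
        | cons c M'' => exact ⟨c, M'', rfl⟩
      have hcb : c = b := by simpa using h2
      subst hcb
      refine ⟨a :: c :: M'', List.isChain_cons_cons.mpr ⟨hab, h1⟩, by simp, ?_, fun x => ?_⟩
      · rw [List.getLast?_cons_cons, h3, List.getLast?_cons_cons]
      · simp only [List.mem_cons] at h4 ⊢
        have := h4 x
        tauto

lemma dag_vis_of_persist (G : DagSys V) (hG : IsRootedDAG G) {L : List (Finset V)} {k : ℕ}
    (h : IsDagPebbling G L) (hk : dagPebSpace L ≤ k) :
    ∃ L', IsDagVisPebbling G L' ∧ dagPebSpace L' ≤ k := by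
  obtain ⟨h1, h2, h3⟩ := h
  have hLne : L ≠ [] := by rintro rfl; simp at h1
  have hrev : L.reverse.Chain' (DagPebStep G) := by
    rw [List.Chain', List.isChain_reverse]
    exact h3.imp fun a b hab => dagStep_symm G hG hab
  have hchain : (L ++ L.reverse).Chain' (fun a b => a = b ∨ DagPebStep G a b) := by
    rw [List.Chain', List.isChain_append]
    refine ⟨h3.imp fun _ _ => Or.inr, hrev.imp fun _ _ => Or.inr, fun x hx y hy => ?_⟩
    rw [List.head?_reverse] at hy
    rw [h2] at hx hy
    have hx' : {G.root} = x := by simpa using hx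
    have hy' : {G.root} = y := by simpa using hy
    exact Or.inl (hx'.symm.trans hy')
  obtain ⟨M', hc1, hc2, hc3, hc4⟩ := dagCompress (L ++ L.reverse) hchain (by simp [hLne])
  have hroot_mem : ({G.root} : Finset V) ∈ L :=
    List.mem_of_mem_getLast? (by simp [h2])
  refine ⟨M', ⟨?_, ?_, ⟨{G.root}, ?_, by simp⟩, hc1⟩, ?_⟩
  · rw [hc2]
    cases L with
    | nil => simp at h1
    | cons a t => simpa using h1
  · rw [hc3, List.getLast?_append_of_ne_nil _ (by simp [hLne]), List.getLast?_reverse, h1]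
  · rw [hc4]
    exact List.mem_append_left _ hroot_mem
  · rw [dagPebSpace_le_iff]
    intro P hP
    rw [hc4, List.mem_append, List.mem_reverse, or_self] at hP
    exact dagPebSpace_le_iff.mp hk P hP

lemma dag_persist_of_vis (G : DagSys V) (hG : IsRootedDAG G) {L : List (Finset V)} {k : ℕ}
    (h : IsDagVisPebbling G L) (hk : dagPebSpace L ≤ k) :
    ∃ L', IsDagPebbling G L' ∧ dagPebSpace L' ≤ k + 1 := by
  obtain ⟨h1, h2, ⟨P, hPL, hrP⟩, h3⟩ := h
  obtain ⟨s, t, rfl⟩ := List.append_of_mem hPL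
  set pre : List (Finset V) := s ++ [P] with hpre_def
  have hassoc : s ++ P :: t = pre ++ t := by simp [hpre_def]
  have hpre_ne : pre ≠ [] := by simp [hpre_def]
  have hpre_chain : pre.Chain' (DagPebStep G) := by
    rw [hassoc, List.Chain', List.isChain_append] at h3
    exact h3.1
  have hpre_head : pre.head? = some ∅ := by
    cases s with
    | nil => simpa [hpre_def] using h1
    | cons a s' => simpa [hpre_def] using h1
  have hpre_last : pre.getLast? = some P := List.getLast?_concat
  set back : List (Finset V) := pre.reverse.map (insert G.root) with hback_def
  have hback_ne : back ≠ [] := by simp [hback_def, hpre_ne]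
  have hback_chain : back.Chain' (fun a b => a = b ∨ DagPebStep G a b) := by
    rw [hback_def, List.Chain', List.isChain_map]
    have : pre.reverse.Chain' (DagPebStep G) := by
      rw [List.Chain', List.isChain_reverse]
      exact hpre_chain.imp fun a b hab => dagStep_symm G hG hab
    exact this.imp fun a b hab => dagStep_insert_root G hab
  have hback_head : back.head? = some P := by
    rw [hback_def, List.head?_map, List.head?_reverse, hpre_last]
    simp [Finset.insert_eq_self.mpr hrP]
  have hback_last : back.getLast? = some {G.root} := by
    rw [hback_def, List.getLast?_map, List.getLast?_reverse, hpre_head]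
    simp
  have hchain : (pre ++ back).Chain' (fun a b => a = b ∨ DagPebStep G a b) := by
    rw [List.Chain', List.isChain_append]
    refine ⟨hpre_chain.imp fun _ _ => Or.inr, hback_chain, fun x hx y hy => ?_⟩
    rw [hpre_last] at hx
    rw [hback_head] at hy
    have hx' : P = x := by simpa using hx
    have hy' : P = y := by simpa using hy
    exact Or.inl (hx'.symm.trans hy')
  obtain ⟨M', hc1, hc2, hc3, hc4⟩ := dagCompress (pre ++ back) hchain (by simp [hpre_ne])
  refine ⟨M', ⟨?_, ?_, hc1⟩, ?_⟩
  · rw [hc2]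
    cases hp : pre with
    | nil => exact absurd hp hpre_ne
    | cons a pr =>
      rw [hp] at hpre_head
      simpa using hpre_head
  · rw [hc3, List.getLast?_append_of_ne_nil _ hback_ne, hback_last]
  · rw [dagPebSpace_le_iff]
    intro Q hQ
    rw [hc4, List.mem_append] at hQ
    have hkL := dagPebSpace_le_iff.mp hk
    rcases hQ with hQ | hQ
    · have : Q ∈ s ++ P :: t := by
        rw [hassoc]
        exact List.mem_append_left _ hQ
      exact (hkL Q this).trans (Nat.le_succ k)
    · rw [hback_def, List.mem_map] at hQ
      obtain ⟨x, hx, rfl⟩ := hQ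
      rw [List.mem_reverse] at hx
      have : x ∈ s ++ P :: t := by
        rw [hassoc]
        exact List.mem_append_left _ hx
      exact (Finset.card_insert_le _ _).trans (Nat.succ_le_succ (hkL x this))


end Aux

/-- For every finite directed acyclic graph `G` with a unique
sink, `vrev(G) ≤ rev(G) ≤ vrev(G) + 1`. -/
theorem vrev_le_rev_le_vrev_add_one {V : Type} [Fintype V] [DecidableEq V]
    (G : DagSys V) (hG : IsRootedDAG G) :
    dagVrevNum G ≤ dagRevNum G ∧ dagRevNum G ≤ dagVrevNum G + 1 := by
  set S1 := {k | ∃ L : List (Finset V), IsDagVisPebbling G L ∧ dagPebSpace L ≤ k} with hS1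
  set S2 := {k | ∃ L : List (Finset V), IsDagPebbling G L ∧ dagPebSpace L ≤ k} with hS2
  have hAB : ∀ k ∈ S2, k ∈ S1 := by
    rintro k ⟨L, hL, hk⟩
    obtain ⟨L', hL', hk'⟩ := dag_vis_of_persist G hG hL hk
    exact ⟨L', hL', hk'⟩
  have hBA : ∀ k ∈ S1, k + 1 ∈ S2 := by
    rintro k ⟨L, hL, hk⟩
    obtain ⟨L', hL', hk'⟩ := dag_persist_of_vis G hG hL hk
    exact ⟨L', hL', hk'⟩
  constructor
  · by_cases hS : S2.Nonempty
    · exact Nat.sInf_le (hAB _ (Nat.sInf_mem hS))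
    · have hS1e : S1 = ∅ := by
        rw [Set.eq_empty_iff_forall_notMem]
        intro k hk
        exact hS ⟨k + 1, hBA k hk⟩
      rw [Set.not_nonempty_iff_eq_empty] at hS
      unfold dagVrevNum dagRevNum
      rw [← hS1, ← hS2, hS, hS1e]
  · by_cases hS : S1.Nonempty
    · exact Nat.sInf_le (hBA _ (Nat.sInf_mem hS))
    · have hS2e : S2 = ∅ := by
        rw [Set.eq_empty_iff_forall_notMem]
        intro k hk
        exact hS ⟨k, hAB k hk⟩
      rw [Set.not_nonempty_iff_eq_empty] at hS
      unfold dagVrevNum dagRevNum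
      rw [← hS1, ← hS2, hS, hS2e]
      simp
end

section
/- For every finite undirected tree U, the contraction number of U equals the edge rank coloring number of U, i.e., contr(U) = erank(U). -/
/-- A matching sequence of length `s` for the graph `U`, encoded by the
equivalence relations `R i` whose classes are the vertices of the `i`-th
contracted tree `T_{i+1}`.  `R 0` is equality (`T₁ = U`), `R s` is the total
relation (single node), each step only merges classes (monotone), classes that
get merged in a step are joined by an edge of `U` (so they are adjacent in the
current contracted tree), and each step merges classes in pairs — i.e. each
new class is a union of at most two old classes — so each step contracts a
matching of the current tree. -/
def IsMatchingSeq {V : Type} (U : SimpleGraph V) (s : ℕ) (R : ℕ → V → V → Prop) : Prop :=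
  (∀ i : ℕ, i ≤ s → Equivalence (R i)) ∧
  (∀ x y : V, R 0 x y ↔ x = y) ∧
  (∀ x y : V, R s x y) ∧
  (∀ i : ℕ, i < s → ∀ x y : V, R i x y → R (i + 1) x y) ∧
  (∀ i : ℕ, i < s → ∀ x y : V, R (i + 1) x y → ¬ R i x y →
      ∃ a b : V, R i x a ∧ R i y b ∧ U.Adj a b) ∧
  (∀ i : ℕ, i < s → ∀ x y z : V, R (i + 1) x y → R (i + 1) y z →
      ¬ R i x y → ¬ R i y z → R i x z)

/-- The contraction number `contr` of `U`: the least length of a matching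
sequence contracting `U` to a single node. -/
noncomputable def contrNum {V : Type} (U : SimpleGraph V) : ℕ :=
  sInf {s | ∃ R : ℕ → V → V → Prop, IsMatchingSeq U s R}

/-- `c` is an edge rank coloring of `G` with the `k` colors `{1, …, k}`:
every edge gets a color in `{1, …, k}`, and whenever two distinct edges get
the same color, every path containing both of them contains an edge of
strictly larger color (for a tree this says that the path between the two
edges contains an edge of larger color). -/
def IsEdgeRankColoring {V : Type} (G : SimpleGraph V) (k : ℕ) (c : Sym2 V → ℕ) : Prop :=
  (∀ e ∈ G.edgeSet, c e ∈ Finset.Icc 1 k) ∧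
  (∀ e ∈ G.edgeSet, ∀ f ∈ G.edgeSet, e ≠ f → c e = c f →
    ∀ (x y : V) (p : G.Walk x y), p.IsPath → e ∈ p.edges → f ∈ p.edges →
      ∃ g ∈ p.edges, c e < c g)

/-- The edge rank coloring number `erank` of `G`: the least number of colors
in an edge rank coloring. -/
noncomputable def erankNum {V : Type} (G : SimpleGraph V) : ℕ :=
  sInf {k | ∃ c : Sym2 V → ℕ, IsEdgeRankColoring G k c}

namespace ContrErank

open SimpleGraph SimpleGraph.Walk

variable {V : Type}

lemma edge_rep {U : SimpleGraph V} {e : Sym2 V} (he : e ∈ U.edgeSet) :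
    ∃ u v, e = s(u, v) ∧ U.Adj u v := by
  revert he
  refine Sym2.ind (fun u v he => ⟨u, v, rfl, he⟩) e

/-! ### Direction B: from an edge rank coloring to a matching sequence -/

/-- The spanning subgraph of `U` consisting of edges with color at most `i`. -/
def lg (U : SimpleGraph V) (c : Sym2 V → ℕ) (i : ℕ) : SimpleGraph V where
  Adj x y := U.Adj x y ∧ c s(x, y) ≤ i
  symm := by
    constructor
    intro x y h
    exact ⟨h.1.symm, by rw [Sym2.eq_swap]; exact h.2⟩
  loopless := ⟨fun x h => U.loopless.irrefl x h.1⟩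

lemma lg_le (U : SimpleGraph V) (c : Sym2 V → ℕ) (i : ℕ) : lg U c i ≤ U :=
  fun _ _ h => h.1

lemma lg_mono (U : SimpleGraph V) (c : Sym2 V → ℕ) {i j : ℕ} (h : i ≤ j) :
    lg U c i ≤ lg U c j := fun _ _ hx => ⟨hx.1, hx.2.trans h⟩

lemma reach_exists_path {U : SimpleGraph V} {c : Sym2 V → ℕ} {i : ℕ} {x y : V}
    (h : (lg U c i).Reachable x y) :
    ∃ p : U.Walk x y, p.IsPath ∧ ∀ e ∈ p.edges, c e ≤ i := by
  classical
  obtain ⟨w⟩ := h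
  have hsub : ∀ e ∈ w.edges, e ∈ U.edgeSet := fun e he =>
    (edgeSet_mono (lg_le U c i)) (w.edges_subset_edgeSet he)
  refine ⟨(w.transfer U hsub).bypass, SimpleGraph.Walk.bypass_isPath _, ?_⟩
  intro e he
  have h1 : e ∈ w.edges := by
    have := (w.transfer U hsub).edges_bypass_subset he
    rwa [SimpleGraph.Walk.edges_transfer] at this
  have he2 : e ∈ (lg U c i).edgeSet := w.edges_subset_edgeSet h1
  revert he2
  refine Sym2.ind (fun a b he2 => ?_) e
  exact ((SimpleGraph.mem_edgeSet _).mp he2).2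

lemma reach_of_path {U : SimpleGraph V} {c : Sym2 V → ℕ} {i : ℕ} {x y : V}
    (p : U.Walk x y) (h : ∀ e ∈ p.edges, c e ≤ i) : (lg U c i).Reachable x y := by
  refine ⟨p.transfer (lg U c i) ?_⟩
  intro e he
  have h1 : e ∈ U.edgeSet := p.edges_subset_edgeSet he
  have h2 := h e he
  revert h1 h2
  refine Sym2.ind (fun a b h1 h2 => ?_) e
  exact (SimpleGraph.mem_edgeSet _).mpr ⟨(SimpleGraph.mem_edgeSet _).mp h1, h2⟩

lemma not_reach_of_big {U : SimpleGraph V} (hU : U.IsTree) {c : Sym2 V → ℕ} {i : ℕ} {a b : V}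
    (hab : U.Adj a b) (hbig : i < c s(a, b)) : ¬ (lg U c i).Reachable a b := by
  classical
  intro h
  obtain ⟨p, hp, hle⟩ := reach_exists_path h
  have hp0 : (SimpleGraph.Walk.cons hab SimpleGraph.Walk.nil).IsPath := by
    simp [SimpleGraph.Walk.cons_isPath_iff, hab.ne]
  have hpq := hU.IsAcyclic.path_unique ⟨p, hp⟩ ⟨_, hp0⟩
  have hpe : p = SimpleGraph.Walk.cons hab SimpleGraph.Walk.nil := congrArg Subtype.val hpq
  have hedge : s(a, b) ∈ p.edges := by rw [hpe]; simp
  exact absurd (hle _ hedge) (not_le.mpr hbig)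

lemma split {U : SimpleGraph V} {c : Sym2 V → ℕ} {i : ℕ} :
    ∀ {x y : V} (p : U.Walk x y), p.edges.Nodup →
    (∀ e ∈ p.edges, c e ≤ i + 1) →
    (∀ e f, e ∈ p.edges → f ∈ p.edges → c e = i + 1 → c f = i + 1 → e = f) →
    ¬(∀ e ∈ p.edges, c e ≤ i) →
    ∃ a b, ∃ q : U.Walk x a, ∃ r : U.Walk b y, U.Adj a b ∧ c s(a, b) = i + 1 ∧
      (∀ e ∈ q.edges, c e ≤ i) ∧ (∀ e ∈ r.edges, c e ≤ i) := by
  intro x y p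
  induction p with
  | nil => intro _ _ _ hne; exact absurd (by simp) hne
  | @cons u w y h q ih =>
    intro hnd hb hu hne
    rw [SimpleGraph.Walk.edges_cons, List.nodup_cons] at hnd
    by_cases hg : c s(u, w) ≤ i
    · have hne' : ¬ ∀ e ∈ q.edges, c e ≤ i := by
        intro hall; apply hne; intro e he
        rw [SimpleGraph.Walk.edges_cons] at he
        rcases List.mem_cons.mp he with rfl | he'
        · exact hg
        · exact hall e he'
      have hb' : ∀ e ∈ q.edges, c e ≤ i + 1 := by
        intro e he
        apply hb e
        rw [SimpleGraph.Walk.edges_cons]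
        exact List.mem_cons_of_mem _ he
      have hu' : ∀ e f, e ∈ q.edges → f ∈ q.edges → c e = i + 1 → c f = i + 1 → e = f := by
        intro e f he hf
        apply hu e f
        · rw [SimpleGraph.Walk.edges_cons]; exact List.mem_cons_of_mem _ he
        · rw [SimpleGraph.Walk.edges_cons]; exact List.mem_cons_of_mem _ hf
      obtain ⟨a, b, q', r, h1, h2, h3, h4⟩ := ih hnd.2 hb' hu' hne'
      refine ⟨a, b, SimpleGraph.Walk.cons h q', r, h1, h2, ?_, h4⟩
      intro e he
      rw [SimpleGraph.Walk.edges_cons] at he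
      rcases List.mem_cons.mp he with rfl | he'
      · exact hg
      · exact h3 e he'
    · have hg1 : c s(u, w) = i + 1 :=
        le_antisymm (hb _ (by simp)) (Nat.succ_le_of_lt (not_le.mp hg))
      refine ⟨u, w, SimpleGraph.Walk.nil, q, h, hg1, by simp, ?_⟩
      intro e he
      by_contra hei
      have hmem : e ∈ (SimpleGraph.Walk.cons h q).edges := by
        rw [SimpleGraph.Walk.edges_cons]
        exact List.mem_cons_of_mem _ he
      have hmem0 : s(u, w) ∈ (SimpleGraph.Walk.cons h q).edges := by
        rw [SimpleGraph.Walk.edges_cons]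
        exact List.mem_cons_self
      have heqe : e = s(u, w) :=
        hu e s(u, w) hmem hmem0
          (le_antisymm (hb e hmem) (Nat.succ_le_of_lt (not_le.mp hei))) hg1
      rw [heqe] at he
      exact hnd.1 he

lemma boundary {U : SimpleGraph V} (hU : U.IsTree) {k : ℕ} {c : Sym2 V → ℕ}
    (hc : IsEdgeRankColoring U k c) {i : ℕ} {x y : V}
    (h1 : (lg U c (i + 1)).Reachable x y) (h0 : ¬ (lg U c i).Reachable x y) :
    ∃ a b, (lg U c i).Reachable x a ∧ (lg U c i).Reachable y b ∧
      U.Adj a b ∧ c s(a, b) = i + 1 := by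
  obtain ⟨p, hp, hb⟩ := reach_exists_path h1
  have hnd := hp.isTrail.edges_nodup
  have hne : ¬ ∀ e ∈ p.edges, c e ≤ i := fun hall => h0 (reach_of_path p hall)
  have hu : ∀ e f, e ∈ p.edges → f ∈ p.edges → c e = i + 1 → c f = i + 1 → e = f := by
    intro e f he hf hce hcf
    by_contra hef
    obtain ⟨g, hg, hlt⟩ := hc.2 e (p.edges_subset_edgeSet he) f (p.edges_subset_edgeSet hf)
      hef (hce.trans hcf.symm) x y p hp he hf
    exact absurd (hb g hg) (not_le.mpr (hce ▸ hlt))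
  obtain ⟨a, b, q, r, hab, hcab, hq, hr⟩ := split p hnd hb hu hne
  exact ⟨a, b, reach_of_path q hq, (reach_of_path r hr).symm, hab, hcab⟩

lemma step6 {U : SimpleGraph V} (hU : U.IsTree) {k : ℕ} {c : Sym2 V → ℕ}
    (hc : IsEdgeRankColoring U k c) {i : ℕ} {x y z : V}
    (hxy : (lg U c (i + 1)).Reachable x y) (hyz : (lg U c (i + 1)).Reachable y z)
    (hxy0 : ¬ (lg U c i).Reachable x y) (hyz0 : ¬ (lg U c i).Reachable y z) :
    (lg U c i).Reachable x z := by
  classical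
  obtain ⟨a, b, hxa, hyb, hab, hcab⟩ := boundary hU hc hxy hxy0
  obtain ⟨a', b', hya', hzb', hab', hcab'⟩ := boundary hU hc hyz hyz0
  by_cases habb : a = b'
  · exact hxa.trans (habb ▸ hzb'.symm)
  have hba' : (lg U c i).Reachable b a' := hyb.symm.trans hya'
  by_cases hef : s(a, b) = s(a', b')
  · rcases Sym2.eq_iff.mp hef with ⟨h1, h2⟩ | ⟨h1, h2⟩
    · subst h1; subst h2
      exact absurd hba'.symm (not_reach_of_big hU hab (by omega))
    · exact absurd h1 habb
  · obtain ⟨mid, hmid, hmidle⟩ := reach_exists_path hba'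
    have hb'mid : b' ∉ mid.support := by
      intro hmem
      have hr : (lg U c i).Reachable b' a' := reach_of_path (mid.dropUntil b' hmem)
        (fun e he => hmidle e (mid.edges_dropUntil_subset hmem he))
      exact not_reach_of_big hU hab' (by omega) hr.symm
    have hamid : a ∉ mid.support := by
      intro hmem
      have hr : (lg U c i).Reachable b a := reach_of_path (mid.takeUntil a hmem)
        (fun e he => hmidle e (mid.edges_takeUntil_subset hmem he))
      exact not_reach_of_big hU hab (by omega) hr.symm
    set W : U.Walk a b' :=
      SimpleGraph.Walk.cons hab
        (mid.append (SimpleGraph.Walk.cons hab' SimpleGraph.Walk.nil)) with hWdef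
    have hWsupp : W.support = a :: (mid.support ++ [b']) := by
      rw [hWdef]
      rw [SimpleGraph.Walk.support_cons, SimpleGraph.Walk.support_append]
      simp
    have hWpath : W.IsPath := by
      rw [SimpleGraph.Walk.isPath_def, hWsupp]
      refine List.nodup_cons.mpr ⟨?_, ?_⟩
      · intro hmem
        rcases List.mem_append.mp hmem with h' | h'
        · exact hamid h'
        · exact habb (List.mem_singleton.mp h')
      · refine List.Nodup.append hmid.support_nodup (List.nodup_singleton _) ?_
        intro t ht ht'
        rw [List.mem_singleton] at ht'
        subst ht'
        exact hb'mid ht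
    have hWedges : W.edges = s(a, b) :: (mid.edges ++ [s(a', b')]) := by
      rw [hWdef]
      rw [SimpleGraph.Walk.edges_cons, SimpleGraph.Walk.edges_append]
      simp
    have hle : ∀ g ∈ W.edges, c g ≤ i + 1 := by
      intro g hg
      rw [hWedges] at hg
      rcases List.mem_cons.mp hg with rfl | hg'
      · omega
      rcases List.mem_append.mp hg' with h' | h'
      · exact (hmidle g h').trans (Nat.le_succ i)
      · rw [List.mem_singleton] at h'; subst h'; omega
    obtain ⟨g, hg, hlt⟩ := hc.2 s(a, b) ((SimpleGraph.mem_edgeSet _).mpr hab) s(a', b')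
      ((SimpleGraph.mem_edgeSet _).mpr hab') hef (hcab.trans hcab'.symm) a b' W hWpath
      (by rw [hWedges]; exact List.mem_cons_self)
      (by rw [hWedges]; exact List.mem_cons_of_mem _ (List.mem_append.mpr (Or.inr (List.mem_singleton_self _))))
    exact absurd (hle g hg) (by omega)

lemma matchingSeq_of_coloring {U : SimpleGraph V} (hU : U.IsTree) {k : ℕ} {c : Sym2 V → ℕ}
    (hc : IsEdgeRankColoring U k c) : ∃ R, IsMatchingSeq U k R := by
  refine ⟨fun i x y => (lg U c i).Reachable x y, ?_, ?_, ?_, ?_, ?_, ?_⟩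
  · intro i _
    exact ⟨fun x => SimpleGraph.Reachable.refl x, fun h => h.symm, fun h h' => h.trans h'⟩
  · intro x y
    constructor
    · intro h
      obtain ⟨w⟩ := h
      cases w with
      | nil => rfl
      | cons h p =>
        have h1 := (Finset.mem_Icc.mp (hc.1 _ ((SimpleGraph.mem_edgeSet _).mpr h.1))).1
        have h2 := h.2
        omega
    · rintro rfl; exact SimpleGraph.Reachable.refl x
  · intro x y
    exact SimpleGraph.Reachable.mono
      (fun a b h => ⟨h, (Finset.mem_Icc.mp (hc.1 _ ((SimpleGraph.mem_edgeSet _).mpr h))).2⟩)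
      (hU.isConnected.preconnected x y)
  · intro i _ x y h
    exact SimpleGraph.Reachable.mono (lg_mono U c (Nat.le_succ i)) h
  · intro i _ x y h1 h0
    obtain ⟨a, b, h2, h3, h4, _⟩ := boundary hU hc h1 h0
    exact ⟨a, b, h2, h3, h4⟩
  · intro i _ x y z h1 h2 h3 h4
    exact step6 hU hc h1 h2 h3 h4

/-! ### Direction A: from a matching sequence to an edge rank coloring -/

lemma Amono {U : SimpleGraph V} {s : ℕ} {R : ℕ → V → V → Prop} (hR : IsMatchingSeq U s R) :
    ∀ j' ≤ s, ∀ j ≤ j', ∀ x y, R j x y → R j' x y := by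
  intro j'
  induction j' with
  | zero =>
    intro _ j hj x y h
    obtain rfl := Nat.le_zero.mp hj
    exact h
  | succ n ih =>
    intro hns j hj x y h
    rcases Nat.lt_or_ge j (n + 1) with hlt | hge
    · exact hR.2.2.2.1 n hns x y
        (ih (le_trans (Nat.le_succ n) hns) j (Nat.lt_succ_iff.mp hlt) x y h)
    · obtain rfl : j = n + 1 := le_antisymm hj hge
      exact h

lemma Aconn {U : SimpleGraph V} {s : ℕ} {R : ℕ → V → V → Prop} (hR : IsMatchingSeq U s R) :
    ∀ i ≤ s, ∀ x y, R i x y → ∃ p : U.Walk x y, ∀ v ∈ p.support, R i x v := by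
  obtain ⟨heq, h0, hs, hmono, hmerge, hmatch⟩ := id hR
  intro i
  induction i with
  | zero =>
    intro _ x y hxy
    obtain rfl := (h0 x y).mp hxy
    refine ⟨SimpleGraph.Walk.nil, ?_⟩
    intro v hv
    rw [SimpleGraph.Walk.support_nil, List.mem_singleton] at hv
    subst hv
    exact (h0 _ _).mpr rfl
  | succ n ih =>
    intro hns x y hxy
    have hn_s : n ≤ s := le_trans (Nat.le_succ n) hns
    by_cases h : R n x y
    · obtain ⟨p, hp⟩ := ih hn_s x y h
      exact ⟨p, fun v hv => hmono n hns x v (hp v hv)⟩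
    · obtain ⟨a, b, hxa, hyb, hab⟩ := hmerge n hns x y hxy h
      obtain ⟨p1, hp1⟩ := ih hn_s x a hxa
      obtain ⟨p2, hp2⟩ := ih hn_s y b hyb
      refine ⟨p1.append (SimpleGraph.Walk.cons hab p2.reverse), ?_⟩
      intro v hv
      rw [SimpleGraph.Walk.mem_support_append_iff] at hv
      rcases hv with hv | hv
      · exact hmono n hns x v (hp1 v hv)
      · rw [SimpleGraph.Walk.support_cons] at hv
        rcases List.mem_cons.mp hv with rfl | hv'
        · exact hmono n hns x v (hp1 v p1.end_mem_support)
        · rw [SimpleGraph.Walk.support_reverse, List.mem_reverse] at hv'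
          exact (heq (n + 1) hns).trans hxy (hmono n hns y v (hp2 v hv'))

lemma Acore {U : SimpleGraph V} (hU : U.IsTree) {s : ℕ} {R : ℕ → V → V → Prop}
    (hR : IsMatchingSeq U s R) {m : ℕ} (hms : m ≤ s)
    {u v x y : V} (huv : U.Adj u v) (hxy : U.Adj x y)
    (hne : s(u, v) ≠ s(x, y)) (hnuv : ¬ R (m - 1) u v)
    (hux : R (m - 1) u x) (hvy : R (m - 1) v y) : False := by
  classical
  obtain ⟨heq, h0, hs, hmono, hmerge, hmatch⟩ := id hR
  have hm1s : m - 1 ≤ s := le_trans (Nat.sub_le m 1) hms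
  obtain ⟨w1, hw1⟩ := Aconn hR (m - 1) hm1s u x hux
  obtain ⟨w2, hw2⟩ := Aconn hR (m - 1) hm1s v y hvy
  set W := w1.append (SimpleGraph.Walk.cons hxy w2.reverse) with hWdef
  have hPpath := W.bypass_isPath
  have hp0 : (SimpleGraph.Walk.cons huv SimpleGraph.Walk.nil).IsPath := by
    simp [SimpleGraph.Walk.cons_isPath_iff, huv.ne]
  have hpq := hU.IsAcyclic.path_unique ⟨W.bypass, hPpath⟩ ⟨_, hp0⟩
  have hbp : W.bypass = SimpleGraph.Walk.cons huv SimpleGraph.Walk.nil := congrArg Subtype.val hpq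
  have hmem : s(u, v) ∈ W.edges := by
    apply W.edges_bypass_subset
    rw [hbp]; simp
  rw [hWdef, SimpleGraph.Walk.edges_append, List.mem_append,
    SimpleGraph.Walk.edges_cons] at hmem
  rcases hmem with hmem | hmem
  · exact hnuv (hw1 v (w1.snd_mem_support_of_mem_edges hmem))
  · rcases List.mem_cons.mp hmem with heq' | hmem'
    · exact hne heq'
    · rw [SimpleGraph.Walk.edges_reverse, List.mem_reverse] at hmem'
      exact hnuv ((heq _ hm1s).symm (hw2 u (w2.fst_mem_support_of_mem_edges hmem')))

lemma coloring_of_matchingSeq {U : SimpleGraph V} (hU : U.IsTree) {s : ℕ}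
    {R : ℕ → V → V → Prop} (hR : IsMatchingSeq U s R) :
    ∃ c, IsEdgeRankColoring U s c := by
  classical
  obtain ⟨heq, h0, hs, hmono, hmerge, hmatch⟩ := id hR
  set c : Sym2 V → ℕ := fun e => sInf {m | ∀ x ∈ e, ∀ y ∈ e, R m x y} with hcdef
  have hSne : ∀ e : Sym2 V, s ∈ {m | ∀ x ∈ e, ∀ y ∈ e, R m x y} := fun e x _ y _ => hs x y
  have hcle : ∀ e, c e ≤ s := fun e => Nat.sInf_le (hSne e)
  have hcmem : ∀ e, ∀ x ∈ e, ∀ y ∈ e, R (c e) x y := fun e => Nat.sInf_mem ⟨s, hSne e⟩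
  have hnotbelow : ∀ u v : V, ∀ j, j < c s(u, v) → ¬ R j u v := by
    intro u v j hj hR'
    have hjs : j ≤ s := le_trans (le_of_lt hj) (hcle _)
    apply Nat.notMem_of_lt_sInf hj
    intro a ha b hb
    rw [Sym2.mem_iff] at ha hb
    rcases ha with rfl | rfl <;> rcases hb with rfl | rfl
    · exact (heq j hjs).refl _
    · exact hR'
    · exact (heq j hjs).symm hR'
    · exact (heq j hjs).refl _
  have hcpos : ∀ u v : V, U.Adj u v → 1 ≤ c s(u, v) := by
    intro u v huv
    by_contra h
    have h0' : c s(u, v) = 0 := by omega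
    have hm := hcmem s(u, v) u (Sym2.mem_mk_left u v) v (Sym2.mem_mk_right u v)
    rw [h0'] at hm
    exact huv.ne ((h0 u v).mp hm)
  have hwalkrel : ∀ m, m ≤ s → ∀ {x y : V} (p : U.Walk x y),
      (∀ g ∈ p.edges, c g ≤ m) → ∀ v ∈ p.support, R m x v := by
    intro m hms x y p
    induction p with
    | nil =>
      intro _ v hv
      rw [SimpleGraph.Walk.support_nil, List.mem_singleton] at hv
      subst hv
      exact (heq m hms).refl _
    | @cons a b y' h q ih =>
      intro hb v hv
      rw [SimpleGraph.Walk.support_cons] at hv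
      have hcab : c s(a, b) ≤ m := hb _ (by simp)
      have hRab : R m a b := Amono hR m hms (c s(a, b)) hcab a b
        (hcmem s(a, b) a (Sym2.mem_mk_left a b) b (Sym2.mem_mk_right a b))
      rcases List.mem_cons.mp hv with rfl | hv'
      · exact (heq m hms).refl _
      · have hbq : ∀ g ∈ q.edges, c g ≤ m := by
          intro g hg
          apply hb g
          rw [SimpleGraph.Walk.edges_cons]
          exact List.mem_cons_of_mem _ hg
        exact (heq m hms).trans hRab (ih hbq v hv')
  refine ⟨c, ?_, ?_⟩
  · intro e he
    obtain ⟨u, v, rfl, huv⟩ := edge_rep he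
    exact Finset.mem_Icc.mpr ⟨hcpos u v huv, hcle _⟩
  · intro e he f hf hef hcef x0 y0 p hp hep hfp
    by_contra hcon
    push_neg at hcon
    obtain ⟨u, v, rfl, huv⟩ := edge_rep he
    obtain ⟨x, y, rfl, hxy⟩ := edge_rep hf
    have hm1 : 1 ≤ c s(u, v) := hcpos u v huv
    have hms : c s(u, v) ≤ s := hcle _
    set m := c s(u, v) with hmdef
    have hm1lt : m - 1 < s := by omega
    have hsucc : m - 1 + 1 = m := by omega
    have hsupp : ∀ w ∈ p.support, R m x0 w := hwalkrel m hms p hcon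
    have hmu : R m x0 u := hsupp u (p.fst_mem_support_of_mem_edges hep)
    have hmv : R m x0 v := hsupp v (p.snd_mem_support_of_mem_edges hep)
    have hmx : R m x0 x := hsupp x (p.fst_mem_support_of_mem_edges hfp)
    have hmy : R m x0 y := hsupp y (p.snd_mem_support_of_mem_edges hfp)
    have hRuv : R m u v := (heq m hms).trans ((heq m hms).symm hmu) hmv
    have hRvx : R m v x := (heq m hms).trans ((heq m hms).symm hmv) hmx
    have hRvy : R m v y := (heq m hms).trans ((heq m hms).symm hmv) hmy
    have hnuv : ¬ R (m - 1) u v := hnotbelow u v (m - 1) (by omega)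
    have hcf : c s(x, y) = m := hcef.symm
    have hnxy : ¬ R (m - 1) x y := hnotbelow x y (m - 1) (by rw [hcf]; omega)
    have hm1s : m - 1 ≤ s := by omega
    have hx' : R (m - 1) u x ∨ R (m - 1) v x := by
      by_cases h1 : R (m - 1) u x
      · exact Or.inl h1
      by_cases h2 : R (m - 1) v x
      · exact Or.inr h2
      exact absurd (hmatch (m - 1) hm1lt u v x (hsucc ▸ hRuv) (hsucc ▸ hRvx) hnuv h2) h1
    have hy' : R (m - 1) u y ∨ R (m - 1) v y := by
      by_cases h1 : R (m - 1) u y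
      · exact Or.inl h1
      by_cases h2 : R (m - 1) v y
      · exact Or.inr h2
      exact absurd (hmatch (m - 1) hm1lt u v y (hsucc ▸ hRuv) (hsucc ▸ hRvy) hnuv h2) h1
    rcases hx' with hx1 | hx2 <;> rcases hy' with hy1 | hy2
    · exact hnxy ((heq _ hm1s).trans ((heq _ hm1s).symm hx1) hy1)
    · exact Acore hU hR hms huv hxy hef hnuv hx1 hy2
    · exact Acore hU hR hms huv hxy.symm
        (by rw [Sym2.eq_swap (a := y)]; exact hef) hnuv hy1 hx2
    · exact hnxy ((heq _ hm1s).trans ((heq _ hm1s).symm hx2) hy2)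

lemma exists_coloring [Fintype V] (U : SimpleGraph V) : ∃ k c, IsEdgeRankColoring U k c := by
  classical
  have hfin : U.edgeSet.Finite := Set.toFinite _
  refine ⟨hfin.toFinset.card,
    fun e => if h : e ∈ hfin.toFinset then (hfin.toFinset.equivFin ⟨e, h⟩).1 + 1 else 0, ?_, ?_⟩
  · intro e he
    have h : e ∈ hfin.toFinset := hfin.mem_toFinset.mpr he
    show (if h : e ∈ hfin.toFinset then ((hfin.toFinset.equivFin ⟨e, h⟩ : Fin _) : ℕ) + 1 else 0) ∈
      Finset.Icc 1 hfin.toFinset.card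
    rw [dif_pos h]
    exact Finset.mem_Icc.mpr ⟨Nat.succ_le_succ (Nat.zero_le _), Nat.succ_le_of_lt (Fin.is_lt _)⟩
  · intro e he f hf hef hc
    exfalso
    have h1 : e ∈ hfin.toFinset := hfin.mem_toFinset.mpr he
    have h2 : f ∈ hfin.toFinset := hfin.mem_toFinset.mpr hf
    have hc' : (if h : e ∈ hfin.toFinset then ((hfin.toFinset.equivFin ⟨e, h⟩ : Fin _) : ℕ) + 1 else 0)
        = (if h : f ∈ hfin.toFinset then ((hfin.toFinset.equivFin ⟨f, h⟩ : Fin _) : ℕ) + 1 else 0) := hc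
    rw [dif_pos h1, dif_pos h2] at hc'
    apply hef
    have hv : hfin.toFinset.equivFin ⟨e, h1⟩ = hfin.toFinset.equivFin ⟨f, h2⟩ :=
      Fin.val_injective (Nat.succ_injective hc')
    have := hfin.toFinset.equivFin.injective hv
    exact congrArg Subtype.val this

end ContrErank

/-- For every finite undirected tree `U`,
`contr(U) = erank(U)`. -/
theorem contr_eq_erank {V : Type} [Fintype V] (U : SimpleGraph V)
    (hU : U.IsTree) : contrNum U = erankNum U := by
  obtain ⟨k0, c0, hc0⟩ := ContrErank.exists_coloring U
  have hEset : {k | ∃ c : Sym2 V → ℕ, IsEdgeRankColoring U k c}.Nonempty := ⟨k0, c0, hc0⟩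
  obtain ⟨c1, hc1⟩ := Nat.sInf_mem hEset
  have hc1' : IsEdgeRankColoring U (erankNum U) c1 := hc1
  obtain ⟨R1, hR1⟩ := ContrErank.matchingSeq_of_coloring hU hc1'
  have hCset : {s | ∃ R : ℕ → V → V → Prop, IsMatchingSeq U s R}.Nonempty := ⟨_, R1, hR1⟩
  have hle1 : contrNum U ≤ erankNum U := Nat.sInf_le ⟨R1, hR1⟩
  obtain ⟨R2, hR2⟩ := Nat.sInf_mem hCset
  have hR2' : IsMatchingSeq U (contrNum U) R2 := hR2
  obtain ⟨c2, hc2⟩ := ContrErank.coloring_of_matchingSeq hU hR2'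
  exact le_antisymm hle1 (Nat.sInf_le ⟨c2, hc2⟩)
end

section
/- If T₁ and T₂ are rooted directed trees whose underlying undirected trees are isomorphic, then rev(T₁) = rev(T₂). In other words, the persistent reversible pebbling number of a rooted directed tree does not depend on the orientation of its edges or the choice of root. -/
/-- A system for pebbling: a finite directed tree given by a root and a parent
function (edges are directed from each non-root vertex to its parent, i.e.
toward the root). -/
structure PebSys (V : Type) where
  root : V
  parent : V → V

/-- `T` is a genuine rooted directed tree: the root is a fixed point of the
parent map and every vertex reaches the root by iterating the parent map. -/
def IsRDTree {V : Type} [Fintype V] (T : PebSys V) : Prop :=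
  T.parent T.root = T.root ∧ ∀ v : V, ∃ k : ℕ, T.parent^[k] v = T.root

/-- One legal move of the reversible pebble game, from configuration `P` to
configuration `Q`: exactly one vertex `v` is pebbled or unpebbled, and all
in-neighbours of `v` (vertices `u ≠ v` with `parent u = v`) carry pebbles
in `P`. -/
def PebStep {V : Type} [DecidableEq V] (T : PebSys V) (P Q : Finset V) : Prop :=
  ∃ v : V, ((v ∉ P ∧ Q = insert v P) ∨ (v ∉ Q ∧ P = insert v Q)) ∧
    ∀ u : V, u ≠ v → T.parent u = v → u ∈ P

/-- A persistent reversible pebbling: starts with no pebbles, ends with a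
pebble exactly on the root, consecutive configurations are legal moves. -/
def IsPebbling {V : Type} [DecidableEq V] (T : PebSys V) (L : List (Finset V)) : Prop :=
  L.head? = some ∅ ∧ L.getLast? = some {T.root} ∧ L.Chain' (PebStep T)

/-- A visiting reversible pebbling: starts and ends with no pebbles, and the
root carries a pebble at some point. -/
def IsVisPebbling {V : Type} [DecidableEq V] (T : PebSys V) (L : List (Finset V)) : Prop :=
  L.head? = some ∅ ∧ L.getLast? = some ∅ ∧ (∃ P ∈ L, T.root ∈ P) ∧ L.Chain' (PebStep T)

/-- The space of a pebbling: the maximum number of pebbles in any configuration. -/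
def pebSpace {V : Type} (L : List (Finset V)) : ℕ := (L.map Finset.card).foldr max 0

/-- The persistent reversible pebbling number `rev`. -/
noncomputable def revNum {V : Type} [DecidableEq V] (T : PebSys V) : ℕ :=
  sInf {k | ∃ L : List (Finset V), IsPebbling T L ∧ pebSpace L ≤ k}

/-- The visiting reversible pebbling number `vrev`. -/
noncomputable def vrevNum {V : Type} [DecidableEq V] (T : PebSys V) : ℕ :=
  sInf {k | ∃ L : List (Finset V), IsVisPebbling T L ∧ pebSpace L ≤ k}

/-- The underlying undirected graph of a rooted directed tree: `u` and `v` are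
adjacent iff one is the parent of the other. -/
def undirG {V : Type} (T : PebSys V) : SimpleGraph V :=
  SimpleGraph.fromRel (fun u v => T.parent u = v)
theorem PebSys.ext' {V : Type} {T₁ T₂ : PebSys V} (h1 : T₁.root = T₂.root)
    (h2 : T₁.parent = T₂.parent) : T₁ = T₂ := by
  cases T₁; cases T₂; cases h1; cases h2; rfl

section Infra
variable {V : Type} [DecidableEq V]

/-- Generalized reachability with an invariant `A` on all configurations and a
space bound `k`. -/
inductive ReachA (T : PebSys V) (k : ℕ) (A : Finset V → Prop) :
    Finset V → Finset V → Prop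
  | refl (P : Finset V) (hA : A P) (hc : P.card ≤ k) : ReachA T k A P P
  | tail {P Q R : Finset V} (h : ReachA T k A P Q) (hs : PebStep T Q R)
      (hA : A R) (hc : R.card ≤ k) : ReachA T k A P R

/-- Plain reachability. -/
def Reach (T : PebSys V) (k : ℕ) : Finset V → Finset V → Prop :=
  ReachA T k (fun _ => True)

theorem PebStep.symm {T : PebSys V} {P Q : Finset V} (h : PebStep T P Q) :
    PebStep T Q P := by
  obtain ⟨v, hv, hin⟩ := h
  refine ⟨v, hv.symm, fun u hu hp => ?_⟩
  have := hin u hu hp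
  rcases hv with ⟨hvP, rfl⟩ | ⟨hvQ, rfl⟩
  · exact Finset.mem_insert_of_mem this
  · exact (Finset.mem_insert.1 this).resolve_left hu

namespace ReachA

theorem mono {T : PebSys V} {k : ℕ} {A B : Finset V → Prop}
    (hAB : ∀ P, A P → B P) {P Q : Finset V} (h : ReachA T k A P Q) :
    ReachA T k B P Q := by
  induction h with
  | refl hA hc => exact .refl _ (hAB _ hA) hc
  | tail h hs hA hc ih => exact .tail ih hs (hAB _ hA) hc

theorem propA_right {T : PebSys V} {k : ℕ} {A : Finset V → Prop} {P Q : Finset V}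
    (h : ReachA T k A P Q) : A Q := by
  cases h with
  | refl hA _ => exact hA
  | tail _ _ hA _ => exact hA

theorem card_right {T : PebSys V} {k : ℕ} {A : Finset V → Prop} {P Q : Finset V}
    (h : ReachA T k A P Q) : Q.card ≤ k := by
  cases h with
  | refl _ hc => exact hc
  | tail _ _ _ hc => exact hc

theorem propA_left {T : PebSys V} {k : ℕ} {A : Finset V → Prop} {P Q : Finset V}
    (h : ReachA T k A P Q) : A P := by
  induction h with
  | refl hA _ => exact hA
  | tail _ _ _ _ ih => exact ih

theorem card_left {T : PebSys V} {k : ℕ} {A : Finset V → Prop} {P Q : Finset V}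
    (h : ReachA T k A P Q) : P.card ≤ k := by
  induction h with
  | refl _ hc => exact hc
  | tail _ _ _ _ ih => exact ih

theorem trans {T : PebSys V} {k : ℕ} {A : Finset V → Prop} {P Q R : Finset V}
    (h₁ : ReachA T k A P Q) (h₂ : ReachA T k A Q R) : ReachA T k A P R := by
  induction h₂ with
  | refl _ _ => exact h₁
  | tail h hs hA hc ih => exact .tail ih hs hA hc

theorem head {T : PebSys V} {k : ℕ} {A : Finset V → Prop} {P Q R : Finset V}
    (hs : PebStep T P Q) (hA : A P) (hc : P.card ≤ k)
    (h : ReachA T k A Q R) : ReachA T k A P R :=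
  (ReachA.tail (.refl P hA hc) hs h.propA_left h.card_left).trans h

theorem symm {T : PebSys V} {k : ℕ} {A : Finset V → Prop} {P Q : Finset V}
    (h : ReachA T k A P Q) : ReachA T k A Q P := by
  induction h with
  | refl hA hc => exact .refl _ hA hc
  | tail h hs hA hc ih => exact ih.head hs.symm hA hc

end ReachA

end Infra
section Bridge
variable {V : Type} [DecidableEq V]

theorem foldr_max_le {l : List ℕ} {k : ℕ} :
    l.foldr max 0 ≤ k ↔ ∀ x ∈ l, x ≤ k := by
  induction l with
  | nil => simp
  | cons a l ih => simp [Nat.max_le, ih]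

theorem reach_of_list {T : PebSys V} {k : ℕ} {L : List (Finset V)}
    (hch : L.Chain' (PebStep T)) (hcard : ∀ P ∈ L, P.card ≤ k) :
    ∀ {P Q : Finset V}, L.head? = some P → L.getLast? = some Q →
      Reach T k P Q := by
  induction L with
  | nil => intro P Q h; simp at h
  | cons a L ih =>
    intro P Q hP hQ
    simp only [List.head?_cons, Option.some.injEq] at hP
    subst hP
    cases L with
    | nil =>
      simp only [List.getLast?_singleton, Option.some.injEq] at hQ
      subst hQ
      exact ReachA.refl _ trivial (hcard _ (by simp))
    | cons b L =>
      have hch' := List.isChain_cons_cons.1 hch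
      have hQ' : (b :: L).getLast? = some Q := by
        rw [← hQ]; exact (List.getLast?_cons_cons ..).symm
      have := ih hch'.2 (fun P hP => hcard P (List.mem_cons_of_mem _ hP))
        (P := b) (by simp) hQ'
      exact this.head hch'.1 trivial (hcard _ (by simp))

theorem list_of_reach {T : PebSys V} {k : ℕ} {P Q : Finset V}
    (h : Reach T k P Q) :
    ∃ L : List (Finset V), L.head? = some P ∧ L.getLast? = some Q ∧
      L.Chain' (PebStep T) ∧ ∀ C ∈ L, C.card ≤ k := by
  induction h with
  | refl hA hc =>
    exact ⟨[P], by simp, by simp, List.isChain_singleton _, by simpa using hc⟩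
  | @tail Q' R h hs hA hc ih =>
    obtain ⟨L, hP, hQ, hch, hcd⟩ := ih
    refine ⟨L ++ [R], ?_, ?_, ?_, ?_⟩
    · cases L with
      | nil => simp at hP
      | cons a L => simpa using hP
    · simp
    · show List.IsChain _ _
      rw [List.isChain_append]
      refine ⟨hch, by simp, fun x hx y hy => ?_⟩
      rw [hQ] at hx
      simp at hx hy
      subst hx; subst hy
      exact hs
    · intro C hC
      rcases List.mem_append.1 hC with h' | h'
      · exact hcd C h'
      · simp at h'; subst h'; exact hc

/-- Characterization of membership in the defining set of `revNum`. -/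
theorem mem_revSet_iff {T : PebSys V} {k : ℕ} :
    (∃ L : List (Finset V), IsPebbling T L ∧ pebSpace L ≤ k) ↔
      Reach T k ∅ {T.root} := by
  constructor
  · rintro ⟨L, ⟨hh, hl, hch⟩, hsp⟩
    refine reach_of_list hch ?_ hh hl
    intro P hP
    exact foldr_max_le.1 hsp _ (List.mem_map_of_mem hP)
  · intro h
    obtain ⟨L, hh, hl, hch, hcd⟩ := list_of_reach h
    refine ⟨L, ⟨hh, hl, hch⟩, foldr_max_le.2 ?_⟩
    rintro x hx
    obtain ⟨C, hC, rfl⟩ := List.mem_map.1 hx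
    exact hcd C hC

theorem revNum_congr {V' : Type} [DecidableEq V'] {T : PebSys V}
    {T' : PebSys V'}
    (h : ∀ k, Reach T k ∅ {T.root} ↔ Reach T' k ∅ {T'.root}) :
    revNum T = revNum T' := by
  unfold revNum
  congr 1
  ext k
  simp only [Set.mem_setOf_eq, mem_revSet_iff]
  exact h k

end Bridge
section Exist
set_option linter.unusedSectionVars false
variable {V : Type} [Fintype V] [DecidableEq V] {T : PebSys V}

theorem reach_union {k : ℕ} {S : Finset V} (F : Finset V)
    (hk : (S ∪ F).card ≤ k)
    (hin : ∀ v ∈ F, ∀ u : V, u ≠ v → T.parent u = v → u ∈ S) :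
    Reach T k S (S ∪ F) := by
  classical
  induction F using Finset.induction_on with
  | empty => rw [Finset.union_empty]; exact .refl _ trivial (by simpa using hk)
  | @insert a F' ha ih =>
    have hsub : S ∪ F' ⊆ S ∪ insert a F' :=
      Finset.union_subset_union_right (Finset.subset_insert _ _)
    have ih' : Reach T k S (S ∪ F') :=
      ih (le_trans (Finset.card_le_card hsub) hk)
        (fun v hv => hin v (Finset.mem_insert_of_mem hv))
    by_cases haS : a ∈ S ∪ F'
    · have : S ∪ insert a F' = S ∪ F' := by
        rw [Finset.union_insert, Finset.insert_eq_self.2 haS]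
      rw [this]; exact ih'
    · have hstep : PebStep T (S ∪ F') (S ∪ insert a F') := by
        refine ⟨a, Or.inl ⟨haS, by rw [Finset.union_insert]⟩, fun u hu hp => ?_⟩
        exact Finset.mem_union_left _ (hin a (Finset.mem_insert_self a F') u hu hp)
      exact ih'.tail hstep trivial hk

theorem reach_sdiff {k : ℕ} {S : Finset V} (F : Finset V)
    (hk : S.card ≤ k)
    (hin : ∀ v ∈ F, ∀ u : V, u ≠ v → T.parent u = v → u ∈ S \ F) :
    Reach T k S (S \ F) := by
  classical
  induction F using Finset.induction_on with
  | empty => rw [Finset.sdiff_empty]; exact .refl _ trivial hk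
  | @insert a F' ha ih =>
    have hsub : S \ insert a F' ⊆ S \ F' :=
      Finset.sdiff_subset_sdiff le_rfl (Finset.subset_insert _ _)
    have ih' : Reach T k S (S \ F') :=
      ih (fun v hv u hu hp => hsub (hin v (Finset.mem_insert_of_mem hv) u hu hp))
    have hEq : S \ insert a F' = (S \ F').erase a := by
      ext x
      simp only [Finset.mem_sdiff, Finset.mem_insert, Finset.mem_erase]
      tauto
    by_cases haS : a ∈ S \ F'
    · have hstep : PebStep T (S \ F') (S \ insert a F') := by
        rw [hEq]
        refine ⟨a, Or.inr ⟨Finset.notMem_erase a _, (Finset.insert_erase haS).symm⟩,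
          fun u hu hp => ?_⟩
        exact hsub (hin a (Finset.mem_insert_self a F') u hu hp)
      exact ih'.tail hstep trivial
        (le_trans (Finset.card_le_card (Finset.sdiff_subset)) hk)
    · have : S \ insert a F' = S \ F' := by
        rw [hEq, Finset.erase_eq_self.2 haS]
      rw [this]; exact ih'

theorem exists_reach (hT : IsRDTree T) :
    Reach T (Fintype.card V) ∅ {T.root} := by
  classical
  set k := Fintype.card V with hkdef
  set N := (Finset.univ.sup fun v : V => Nat.find (hT.2 v)) + 1 with hN
  have hfind : ∀ v : V, Nat.find (hT.2 v) < N := by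
    intro v
    exact Nat.lt_succ_of_le
      (Finset.le_sup (f := fun v : V => Nat.find (hT.2 v)) (Finset.mem_univ v))
  -- building phase
  set S : ℕ → Finset V :=
    fun n => Finset.univ.filter (fun v => ∀ j < n, T.parent^[j] v ≠ T.root) with hS
  have hS0 : S 0 = Finset.univ := by
    ext v; simp [hS]
  have hSN : S N = ∅ := by
    ext v
    simp only [hS, Finset.mem_filter, Finset.mem_univ, true_and, Finset.notMem_empty,
      iff_false, not_forall]
    exact ⟨_, hfind v, not_not_intro (Nat.find_spec (hT.2 v))⟩
  have hSstep : ∀ n, Reach T k ∅ (S (n+1)) → Reach T k ∅ (S n) := by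
    intro n h
    have hdecomp : S n = S (n+1) ∪
        Finset.univ.filter (fun v => (∀ j < n, T.parent^[j] v ≠ T.root) ∧
          T.parent^[n] v = T.root) := by
      ext v
      simp only [hS, Finset.mem_union, Finset.mem_filter, Finset.mem_univ, true_and]
      constructor
      · intro hv
        by_cases hn : T.parent^[n] v = T.root
        · exact Or.inr ⟨hv, hn⟩
        · exact Or.inl (fun j hj => by
            rcases Nat.lt_succ_iff_lt_or_eq.1 hj with hj' | rfl
            · exact hv j hj'
            · exact hn)
      · rintro (hv | ⟨hv, _⟩) j hj
        · exact hv j (Nat.lt_succ_of_lt hj)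
        · exact hv j hj
    rw [hdecomp]
    refine h.trans (reach_union _ (by rw [← hdecomp]; exact Finset.card_le_univ _) ?_)
    rintro v hv u hu hp
    simp only [Finset.mem_filter, Finset.mem_univ, true_and] at hv
    simp only [hS, Finset.mem_filter, Finset.mem_univ, true_and]
    intro j hj
    cases j with
    | zero =>
      simp only [Function.iterate_zero, id_eq]
      intro hroot
      have hvroot : v = T.root := by rw [← hp, hroot, hT.1]
      exact hu (hroot.trans hvroot.symm)
    | succ j =>
      rw [Function.iterate_succ_apply, hp]
      exact hv.1 j (by omega)
  have hbuild : ∀ m, Reach T k ∅ (S (N - m)) := by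
    intro m
    induction m with
    | zero => rw [Nat.sub_zero, hSN]; exact (ReachA.refl (T := T) (k := k) (A := fun _ => True)
        ∅ trivial (by simp))
    | succ m ih =>
      by_cases hm : N ≤ m
      · have : N - (m+1) = N - m := by omega
        rw [this]; exact ih
      · have : N - m = (N - (m+1)) + 1 := by omega
        rw [this] at ih
        exact hSstep _ ih
  have hreach_univ : Reach T k ∅ Finset.univ := by
    have := hbuild N
    rwa [Nat.sub_self, hS0] at this
  -- removal phase
  set U : ℕ → Finset V :=
    fun n => Finset.univ.filter
      (fun v => v = T.root ∨ ∀ j < n, T.parent^[j] v ≠ T.root) with hU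
  have hU0 : U 0 = Finset.univ := by ext v; simp [hU]
  have hUN : U N = {T.root} := by
    ext v
    simp only [hU, Finset.mem_filter, Finset.mem_univ, true_and, Finset.mem_singleton]
    constructor
    · rintro (rfl | hv)
      · rfl
      · exact absurd (Nat.find_spec (hT.2 v)) (hv _ (hfind v))
    · rintro rfl; exact Or.inl rfl
  have hUstep : ∀ n, Reach T k Finset.univ (U n) → Reach T k Finset.univ (U (n+1)) := by
    intro n h
    set Fn := Finset.univ.filter (fun v => v ≠ T.root ∧
      (∀ j < n, T.parent^[j] v ≠ T.root) ∧ T.parent^[n] v = T.root) with hFn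
    have hdecomp : U n \ Fn = U (n+1) := by
      ext v
      simp only [hU, hFn, Finset.mem_sdiff, Finset.mem_filter, Finset.mem_univ, true_and]
      constructor
      · rintro ⟨h1, h2⟩
        by_cases hv : v = T.root
        · exact Or.inl hv
        · refine Or.inr fun j hj => ?_
          rcases Nat.lt_succ_iff_lt_or_eq.1 hj with hj' | rfl
          · exact (h1.resolve_left hv) j hj'
          · intro hc
            exact h2 ⟨hv, h1.resolve_left hv, hc⟩
      · rintro (rfl | h1)
        · exact ⟨Or.inl rfl, fun hc => hc.1 rfl⟩
        · exact ⟨Or.inr fun j hj => h1 j (Nat.lt_succ_of_lt hj),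
            fun hc => h1 n (Nat.lt_succ_self n) hc.2.2⟩
    have hin : ∀ v ∈ Fn, ∀ u : V, u ≠ v → T.parent u = v → u ∈ U n \ Fn := by
      intro v hv u hu hp
      simp only [hFn, Finset.mem_filter, Finset.mem_univ, true_and] at hv
      rw [hdecomp]
      simp only [hU, Finset.mem_filter, Finset.mem_univ, true_and]
      have hune : u ≠ T.root := by
        intro rfl'
        subst rfl'
        exact hv.1 (by rw [← hp, hT.1])
      refine Or.inr ?_
      intro j hj
      cases j with
      | zero => simpa using hune
      | succ j =>
        rw [Function.iterate_succ_apply, hp]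
        exact hv.2.1 j (by omega)
    have hstep := reach_sdiff (T := T) (k := k) (S := U n) Fn
      (Finset.card_le_univ _) hin
    rw [hdecomp] at hstep
    exact h.trans hstep
  have hremove : ∀ m, Reach T k Finset.univ (U m) := by
    intro m
    induction m with
    | zero => rw [hU0]; exact .refl _ trivial (Finset.card_le_univ _)
    | succ m ih => exact hUstep m ih
  have := hremove N
  rw [hUN] at this
  exact hreach_univ.trans this

end Exist
section Reroot
set_option linter.unusedSectionVars false
variable {V : Type} [DecidableEq V]

/-- Rerooting a tree at a new root `r'` (meant to be a child of the old root):
the old root's parent becomes `r'`, `r'` becomes its own parent, everything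
else is unchanged. -/
def reroot (T : PebSys V) (r' : V) : PebSys V :=
  ⟨r', fun v => if v = r' then r' else if v = T.root then r' else T.parent v⟩

variable {T : PebSys V} {r' : V}

theorem reroot_parent_cases {u v : V} (h : (reroot T r').parent u = v) :
    (u = r' ∧ v = r') ∨ (u = T.root ∧ v = r') ∨
      (u ≠ r' ∧ u ≠ T.root ∧ T.parent u = v) := by
  unfold reroot at h
  dsimp at h
  split_ifs at h with h1 h2
  · exact Or.inl ⟨h1, h.symm⟩
  · exact Or.inr (Or.inl ⟨h2, h.symm⟩)
  · exact Or.inr (Or.inr ⟨h1, h2, h⟩)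

theorem step_mem_iff {P Q : Finset V} {v x : V}
    (hshape : (v ∉ P ∧ Q = insert v P) ∨ (v ∉ Q ∧ P = insert v Q))
    (hx : x ≠ v) : (x ∈ P ↔ x ∈ Q) := by
  rcases hshape with ⟨hv, rfl⟩ | ⟨hv, rfl⟩ <;>
    simp [Finset.mem_insert, hx]

/-- Phase I transform: delete `r'` from every configuration. -/
theorem aux1 {k : ℕ} {P Q : Finset V}
    (h : Reach T k P Q) :
    Reach (reroot T r') k (P.erase r') (Q.erase r') := by
  induction h with
  | refl hA hc =>
    exact .refl _ trivial (le_trans (Finset.card_le_card (Finset.erase_subset _ _)) hc)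
  | @tail Q' R hR hs hA hc ih =>
    obtain ⟨v, hshape, hin⟩ := hs
    by_cases hv : v = r'
    · subst hv
      have : Q'.erase v = R.erase v := by
        rcases hshape with ⟨hv, rfl⟩ | ⟨hv, rfl⟩
        · rw [Finset.erase_insert hv, Finset.erase_eq_of_notMem hv]
        · rw [Finset.erase_insert hv, Finset.erase_eq_of_notMem hv]
      rwa [this] at ih
    · refine ih.tail ⟨v, ?_, ?_⟩ trivial
        (le_trans (Finset.card_le_card (Finset.erase_subset _ _)) hc)
      · rcases hshape with ⟨hvq, rfl⟩ | ⟨hvq, rfl⟩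
        · exact Or.inl ⟨fun hc' => hvq (Finset.mem_of_mem_erase hc'),
            Finset.erase_insert_of_ne hv⟩
        · exact Or.inr ⟨fun hc' => hvq (Finset.mem_of_mem_erase hc'),
            Finset.erase_insert_of_ne hv⟩
      · intro u hu hp
        rcases reroot_parent_cases hp with ⟨_, rfl⟩ | ⟨_, rfl⟩ | ⟨hu1, hu2, hp'⟩
        · exact absurd rfl hv
        · exact absurd rfl hv
        · exact Finset.mem_erase.2 ⟨hu1, hin u hu hp'⟩

theorem f2_card {C : Finset V} (hroot : T.root ∈ C) :
    (insert r' (C.erase T.root)).card ≤ C.card := by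
  refine le_trans (Finset.card_insert_le _ _) ?_
  have hpos : 1 ≤ C.card := Finset.card_pos.2 ⟨_, hroot⟩
  rw [Finset.card_erase_of_mem hroot]
  omega

/-- Phase V/VI transform: swap the pebble on the old root for one on `r'`,
along a stretch where the old root is always pebbled. -/
theorem aux2 {k : ℕ} {P Q : Finset V} (hne : r' ≠ T.root)
    (h : ReachA T k (fun C => T.root ∈ C) P Q) :
    Reach (reroot T r') k (insert r' (P.erase T.root)) (insert r' (Q.erase T.root)) := by
  induction h with
  | refl hA hc => exact .refl _ trivial (le_trans (f2_card hA) hc)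
  | @tail Q' R hR hs hA hc ih =>
    obtain ⟨v, hshape, hin⟩ := hs
    by_cases hvr : v = T.root
    · subst hvr
      have : insert r' (Q'.erase T.root) = insert r' (R.erase T.root) := by
        rcases hshape with ⟨hv, rfl⟩ | ⟨hv, rfl⟩
        · rw [Finset.erase_insert hv, Finset.erase_eq_of_notMem hv]
        · rw [Finset.erase_insert hv, Finset.erase_eq_of_notMem hv]
      rwa [this] at ih
    · by_cases hvr' : v = r'
      · subst hvr'
        have : insert v (Q'.erase T.root) = insert v (R.erase T.root) := by
          rcases hshape with ⟨hv, rfl⟩ | ⟨hv, rfl⟩ <;>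
            rw [Finset.erase_insert_of_ne hne, Finset.insert_idem]
        rwa [this] at ih
      · refine ih.tail ⟨v, ?_, ?_⟩ trivial (le_trans (f2_card hA) hc)
        · have key : ∀ S : Finset V, v ∉ S →
              insert r' ((insert v S).erase T.root) =
                insert v (insert r' (S.erase T.root)) := by
            intro S hvS
            rw [Finset.erase_insert_of_ne hvr, Finset.insert_comm]
          rcases hshape with ⟨hvq, rfl⟩ | ⟨hvq, rfl⟩
          · refine Or.inl ⟨?_, key _ hvq⟩
            simp only [Finset.mem_insert, Finset.mem_erase]
            push_neg
            exact ⟨hvr', fun _ => hvq⟩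
          · refine Or.inr ⟨?_, key _ hvq⟩
            simp only [Finset.mem_insert, Finset.mem_erase]
            push_neg
            exact ⟨hvr', fun _ => hvq⟩
        · intro u hu hp
          rcases reroot_parent_cases hp with ⟨_, rfl⟩ | ⟨_, rfl⟩ | ⟨hu1, hu2, hp'⟩
          · exact absurd rfl hvr'
          · exact absurd rfl hvr'
          · exact Finset.mem_insert_of_mem
              (Finset.mem_erase.2 ⟨hu2, hin u hu hp'⟩)

/-- Phase III transform: along a stretch where the old root is always pebbled,
any legal sequence for `T` is legal for the rerooted tree. -/
theorem aux4 {k : ℕ} {P Q : Finset V}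
    (h : ReachA T k (fun C => T.root ∈ C) P Q) :
    Reach (reroot T r') k P Q := by
  induction h with
  | refl hA hc => exact .refl _ trivial hc
  | @tail Q' R hR hs hA hc ih =>
    obtain ⟨v, hshape, hin⟩ := hs
    have hvroot : v ≠ T.root := by
      rintro rfl
      rcases hshape with ⟨hv, rfl⟩ | ⟨hv, rfl⟩
      · exact hv hR.propA_right
      · exact hv hA
    refine ih.tail ⟨v, hshape, ?_⟩ trivial hc
    intro u hu hp
    rcases reroot_parent_cases hp with ⟨rfl, rfl⟩ | ⟨rfl, _⟩ | ⟨_, _, hp'⟩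
    · exact absurd rfl hu
    · exact hR.propA_right
    · exact hin u hu hp'

end Reroot
section Walks
set_option linter.unusedSectionVars false
variable {V : Type} [DecidableEq V] {T : PebSys V} {r' : V} {k : ℕ}

/-- Backward extraction of the last move on `r'` (a removal). -/
theorem walk1 (hroot : T.parent T.root = T.root) (hpr' : T.parent r' = T.root)
    (hne : r' ≠ T.root) {Q : Finset V} (h : Reach T k ∅ Q) :
    T.root ∈ Q → r' ∉ Q →
    ∃ D : Finset V, Reach T k ∅ D ∧ r' ∈ D ∧ T.root ∈ D ∧
      (∀ u : V, u ≠ r' → T.parent u = r' → u ∈ D) ∧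
      ReachA T k (fun C => T.root ∈ C ∧ r' ∉ C) (D.erase r') Q := by
  induction h with
  | refl hA hc => intro h1 _; exact absurd h1 (by simp)
  | @tail Q' R hQ' hs hA hc ih =>
    intro hrR hr'R
    obtain ⟨v, hshape, hin⟩ := hs
    by_cases hv' : v = r'
    · subst hv'
      rcases hshape with ⟨hvq, rfl⟩ | ⟨hvr, rfl⟩
      · exact absurd (Finset.mem_insert_self _ _) hr'R
      · refine ⟨insert v R, hQ', Finset.mem_insert_self _ _,
          Finset.mem_insert_of_mem hrR, hin, ?_⟩
        rw [Finset.erase_insert hvr]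
        exact .refl R ⟨hrR, hvr⟩ hc
    · by_cases hv : v = T.root
      · exfalso
        subst hv
        have hr'Q' : r' ∈ Q' := hin r' hne hpr'
        exact hr'R ((step_mem_iff hshape hne).1 hr'Q')
      · have hmem := step_mem_iff (v := v) (x := T.root) hshape (Ne.symm hv)
        have hmem' := step_mem_iff (v := v) (x := r') hshape (Ne.symm hv')
        obtain ⟨D, h1, h2, h3, h4, h5⟩ := ih (hmem.2 hrR) (fun hc' => hr'R (hmem'.1 hc'))
        exact ⟨D, h1, h2, h3, h4, h5.tail ⟨v, hshape, hin⟩ ⟨hrR, hr'R⟩ hc⟩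

/-- Backward extraction of the last move on the root (a placement). -/
theorem walk2 {Q : Finset V} (h : Reach T k ∅ Q) :
    T.root ∈ Q →
    ∃ Cp : Finset V, T.root ∉ Cp ∧
      (∀ u : V, u ≠ T.root → T.parent u = T.root → u ∈ Cp) ∧
      ReachA T k (fun C => T.root ∈ C) (insert T.root Cp) Q := by
  induction h with
  | refl hA hc => intro h1; exact absurd h1 (by simp)
  | @tail Q' R hQ' hs hA hc ih =>
    intro hrR
    obtain ⟨v, hshape, hin⟩ := hs
    by_cases hv : v = T.root
    · subst hv
      rcases hshape with ⟨hvq, rfl⟩ | ⟨hvr, rfl⟩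
      · exact ⟨Q', hvq, hin, .refl _ hrR hc⟩
      · exact absurd hrR hvr
    · have hmem := step_mem_iff (v := v) (x := T.root) hshape (Ne.symm hv)
      obtain ⟨Cp, h1, h2, h3⟩ := ih (hmem.2 hrR)
      exact ⟨Cp, h1, h2, h3.tail ⟨v, hshape, hin⟩ hrR hc⟩

/-- The heart of the matter: a persistent pebbling of `T` with space `k`
yields a persistent pebbling of the tree rerooted at a child `r'` of the
root, with the same space. -/
theorem reach_reroot (hroot : T.parent T.root = T.root)
    (hpr' : T.parent r' = T.root) (hne : r' ≠ T.root)
    (h : Reach T k ∅ {T.root}) : Reach (reroot T r') k ∅ {r'} := by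
  obtain ⟨D, hpre, hr'D, hrD, hKA, seg1⟩ :=
    walk1 hroot hpr' hne h (Finset.mem_singleton_self _)
      (by simp [hne])
  obtain ⟨Cp, hrCp, hKB, seg2⟩ := walk2 hpre hrD
  have hr'Cp : r' ∈ Cp := hKB r' hne hpr'
  -- Phase I : build up to `D` minus `r'`
  have phase1 : Reach (reroot T r') k ∅ (D.erase r') := by
    have := aux1 (r' := r') hpre
    rwa [Finset.erase_empty] at this
  -- Phase II : place `r'`
  have step2 : PebStep (reroot T r') (D.erase r') D := by
    refine ⟨r', Or.inl ⟨Finset.notMem_erase _ _, (Finset.insert_erase hr'D).symm⟩, ?_⟩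
    intro u hu hp
    rcases reroot_parent_cases hp with ⟨h1, _⟩ | ⟨h1, _⟩ | ⟨h1, h2, hp'⟩
    · exact absurd h1 hu
    · subst h1; exact Finset.mem_erase.2 ⟨Ne.symm hne, hrD⟩
    · exact Finset.mem_erase.2 ⟨h1, hKA u hu hp'⟩
  have phase2 : Reach (reroot T r') k ∅ D :=
    phase1.tail step2 trivial hpre.card_right
  -- Phase III : back down to the configuration right after the root was placed
  have phase3 : Reach (reroot T r') k D (insert T.root Cp) := aux4 seg2.symm
  -- Phase IV : remove the root
  have step4 : PebStep (reroot T r') (insert T.root Cp) Cp := by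
    refine ⟨T.root, Or.inr ⟨hrCp, rfl⟩, ?_⟩
    intro u hu hp
    rcases reroot_parent_cases hp with ⟨_, h2⟩ | ⟨_, h2⟩ | ⟨h1, h2, hp'⟩
    · exact absurd h2.symm hne
    · exact absurd h2.symm hne
    · exact Finset.mem_insert_of_mem (hKB u h2 hp')
  have phase4 : Reach (reroot T r') k ∅ Cp :=
    (phase2.trans phase3).tail step4 trivial
      (le_trans (Finset.card_le_card (Finset.subset_insert _ _)) seg2.card_left)
  -- Phase V : forward again, with the root's pebble moved to `r'`
  have phase5 : Reach (reroot T r') k Cp (insert r' (D.erase T.root)) := by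
    have := aux2 hne seg2
    rwa [Finset.erase_insert hrCp, Finset.insert_eq_self.2 hr'Cp] at this
  -- Phase VI : finish, with the root's pebble moved to `r'`
  have phase6 : Reach (reroot T r') k (insert r' (D.erase T.root)) {r'} := by
    have := aux2 hne (seg1.mono (fun P hP => hP.1))
    have e1 : insert r' ((D.erase r').erase T.root) = insert r' (D.erase T.root) := by
      ext x
      simp only [Finset.mem_insert, Finset.mem_erase]
      constructor
      · rintro (rfl | ⟨h1, h2, h3⟩)
        · exact Or.inl rfl
        · exact Or.inr ⟨h1, h3⟩
      · rintro (rfl | ⟨h1, h2⟩)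
        · exact Or.inl rfl
        · rcases eq_or_ne x r' with rfl | hx
          · exact Or.inl rfl
          · exact Or.inr ⟨h1, hx, h2⟩
    have e2 : insert r' (Finset.erase {T.root} T.root) = {r'} := by
      rw [Finset.erase_singleton]; rfl
    rwa [e1, e2] at this
  exact ((phase4.trans phase5).trans phase6)

end Walks
section RProps
set_option linter.unusedSectionVars false
variable {V : Type} [Fintype V] [DecidableEq V] {T : PebSys V} {r' : V}

theorem reroot_reroot (hroot : T.parent T.root = T.root)
    (hpr' : T.parent r' = T.root) (hne : r' ≠ T.root) :
    reroot (reroot T r') T.root = T := by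
  refine PebSys.ext' rfl (funext fun v => ?_)
  show (if v = T.root then T.root
    else if v = r' then T.root else (reroot T r').parent v) = T.parent v
  by_cases h1 : v = T.root
  · rw [if_pos h1, h1, hroot]
  · rw [if_neg h1]
    by_cases h2 : v = r'
    · rw [if_pos h2, h2, hpr']
    · rw [if_neg h2]
      show (if v = r' then r' else if v = T.root then r' else T.parent v) = T.parent v
      rw [if_neg h2, if_neg h1]

theorem isRDTree_reroot (hT : IsRDTree T)
    (hpr' : T.parent r' = T.root) (hne : r' ≠ T.root) :
    IsRDTree (reroot T r') := by
  constructor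
  · show (if r' = r' then r' else _) = r'
    simp
  · have key : ∀ n v, T.parent^[n] v = T.root → ∃ m, (reroot T r').parent^[m] v = r' := by
      intro n
      induction n with
      | zero =>
        intro v hv
        simp only [Function.iterate_zero, id_eq] at hv
        subst hv
        refine ⟨1, ?_⟩
        show (if T.root = r' then r' else if T.root = T.root then r' else _) = r'
        simp [Ne.symm hne]
      | succ n ih =>
        intro v hv
        rcases eq_or_ne v r' with rfl | hv'
        · exact ⟨0, rfl⟩
        · rcases eq_or_ne v T.root with rfl | hvr
          · refine ⟨1, ?_⟩
            show (if T.root = r' then r' else if T.root = T.root then r' else _) = r'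
            simp [Ne.symm hne]
          · rw [Function.iterate_succ_apply] at hv
            obtain ⟨m, hm⟩ := ih (T.parent v) hv
            refine ⟨m + 1, ?_⟩
            rw [Function.iterate_succ_apply]
            have : (reroot T r').parent v = T.parent v := by
              show (if v = r' then r' else if v = T.root then r' else T.parent v) = _
              simp [hv', hvr]
            rw [this]
            exact hm
    intro v
    obtain ⟨n, hn⟩ := hT.2 v
    exact key n v hn

theorem undirG_reroot (hroot : T.parent T.root = T.root)
    (hpr' : T.parent r' = T.root) (hne : r' ≠ T.root) :
    undirG (reroot T r') = undirG T := by
  have hp' : ∀ v, (reroot T r').parent v =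
      (if v = r' then r' else if v = T.root then r' else T.parent v) := fun v => rfl
  have fwd : ∀ u v : V, (reroot T r').parent u = v → v ≠ u →
      (T.parent u = v ∨ T.parent v = u) := by
    intro u v h hvu
    rcases reroot_parent_cases h with ⟨h1, h2⟩ | ⟨h1, h2⟩ | ⟨_, _, h3⟩
    · exact absurd (h2.trans h1.symm) hvu
    · exact Or.inr (by rw [h2, hpr', h1])
    · exact Or.inl h3
  have bwd : ∀ u v : V, T.parent u = v → v ≠ u →
      ((reroot T r').parent u = v ∨ (reroot T r').parent v = u) := by
    intro u v h hvu
    by_cases h1 : u = r'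
    · refine Or.inr ?_
      have hv : v = T.root := by rw [← h, h1, hpr']
      rw [hp', if_neg (show ¬ v = r' from fun hc => hne (hc ▸ hv)), if_pos hv, h1]
    · by_cases h2 : u = T.root
      · exact absurd (by rw [← h, h2, hroot] : v = u) hvu
      · exact Or.inl (by rw [hp', if_neg h1, if_neg h2, h])
  ext u v
  show (undirG (reroot T r')).Adj u v ↔ (undirG T).Adj u v
  unfold undirG
  rw [SimpleGraph.fromRel_adj, SimpleGraph.fromRel_adj]
  refine and_congr_right fun huv => ⟨?_, ?_⟩
  · rintro (h | h)
    · exact fwd u v h (Ne.symm huv)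
    · exact (fwd v u h huv).symm
  · rintro (h | h)
    · exact bwd u v h (Ne.symm huv)
    · exact (bwd v u h huv).symm

theorem revNum_le_of_reach {k : ℕ} (h : Reach T k ∅ {T.root}) : revNum T ≤ k :=
  Nat.sInf_le (mem_revSet_iff.2 h)

theorem reach_revNum (hT : IsRDTree T) : Reach T (revNum T) ∅ {T.root} := by
  have hnonempty : {k | ∃ L : List (Finset V), IsPebbling T L ∧ pebSpace L ≤ k}.Nonempty :=
    ⟨_, mem_revSet_iff.2 (exists_reach hT)⟩
  exact mem_revSet_iff.1 (Nat.sInf_mem hnonempty)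

theorem revNum_reroot_le (hT : IsRDTree T)
    (hpr' : T.parent r' = T.root) (hne : r' ≠ T.root) :
    revNum (reroot T r') ≤ revNum T := by
  have h := reach_revNum hT
  have h' := reach_reroot hT.1 hpr' hne h
  exact revNum_le_of_reach h'

theorem revNum_reroot_eq (hT : IsRDTree T)
    (hpr' : T.parent r' = T.root) (hne : r' ≠ T.root) :
    revNum (reroot T r') = revNum T := by
  refine le_antisymm (revNum_reroot_le hT hpr' hne) ?_
  have hT' : IsRDTree (reroot T r') := isRDTree_reroot hT hpr' hne
  have h2 : (reroot T r').parent T.root = (reroot T r').root := by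
    show (if T.root = r' then r' else if T.root = T.root then r' else _) = r'
    simp [Ne.symm hne]
  have h3 : T.root ≠ (reroot T r').root := Ne.symm hne
  have := revNum_reroot_le hT' h2 h3
  rwa [reroot_reroot hT.1 hpr' hne] at this

end RProps
section Rigidity
set_option linter.unusedSectionVars false
variable {V : Type} [Fintype V] [DecidableEq V]

theorem root_unique_fixed {T : PebSys V} (hT : IsRDTree T) {v : V}
    (hfix : T.parent v = v) : v = T.root := by
  obtain ⟨n, hn⟩ := hT.2 v
  rwa [Function.iterate_fixed hfix] at hn

theorem iterate_root {T : PebSys V} (hT : IsRDTree T) (n : ℕ) :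
    T.parent^[n] T.root = T.root :=
  Function.iterate_fixed hT.1 n

/-- Rigidity: a rooted directed tree is determined by its undirected graph
and its root. -/
theorem eq_of_same_graph_root {T₁ T₂ : PebSys V} (h₁ : IsRDTree T₁)
    (h₂ : IsRDTree T₂) (hG : undirG T₁ = undirG T₂) (hr : T₁.root = T₂.root) :
    T₁ = T₂ := by
  have hAdj : ∀ u v : V, (undirG T₁).Adj u v ↔ (undirG T₂).Adj u v :=
    fun u v => by rw [hG]
  have hAdj' : ∀ u v : V,
      (u ≠ v ∧ (T₁.parent u = v ∨ T₁.parent v = u)) ↔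
        (u ≠ v ∧ (T₂.parent u = v ∨ T₂.parent v = u)) := by
    intro u v
    have := hAdj u v
    unfold undirG at this
    rwa [SimpleGraph.fromRel_adj, SimpleGraph.fromRel_adj] at this
  refine PebSys.ext' hr (funext fun v => ?_)
  by_cases hv : v = T₁.root
  · rw [hv, h₁.1, hr]
    exact (h₂.1).symm
  · -- v is not the root
    have hwv : T₂.parent v ≠ v := by
      intro hfix
      exact hv ((root_unique_fixed h₂ hfix).trans hr.symm)
    have hadj2 : (v ≠ T₂.parent v ∧
        (T₂.parent v = T₂.parent v ∨ T₂.parent (T₂.parent v) = v)) :=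
      ⟨Ne.symm hwv, Or.inl rfl⟩
    have hadj1 := (hAdj' v (T₂.parent v)).2 ⟨hadj2.1, Or.inl rfl⟩
    rcases hadj1.2 with h | hc
    · exact h
    · -- impossible case : T₁.parent (T₂.parent v) = v
      exfalso
      set Sprop : V → Prop := fun x => ∃ n, T₁.parent^[n] x = v with hS
      have hrootS : ¬ Sprop T₁.root := by
        rintro ⟨n, hn⟩
        rw [iterate_root h₁] at hn
        exact hv hn.symm
      have hstep : ∀ x, Sprop x → Sprop (T₂.parent x) := by
        rintro x ⟨n, hn⟩
        have hxroot : x ≠ T₁.root := fun hx => hrootS (hx ▸ ⟨n, hn⟩)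
        have hpx : T₂.parent x ≠ x := by
          intro hfix
          exact hxroot ((root_unique_fixed h₂ hfix).trans hr.symm)
        have hadjx := (hAdj' x (T₂.parent x)).2 ⟨Ne.symm hpx, Or.inl rfl⟩
        rcases hadjx.2 with heq | hpq
        · by_cases hxv : x = v
          · subst hxv
            exact ⟨1, by simpa using hc⟩
          · cases n with
            | zero => exact absurd hn hxv
            | succ n =>
              rw [Function.iterate_succ_apply] at hn
              rw [heq] at hn
              exact ⟨n, hn⟩
        · exact ⟨n + 1, by rw [Function.iterate_succ_apply, hpq]; exact hn⟩
      have hiter : ∀ n, Sprop (T₂.parent^[n] v) := by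
        intro n
        induction n with
        | zero => exact ⟨0, rfl⟩
        | succ n ih =>
          rw [Function.iterate_succ_apply']
          exact hstep _ ih
      obtain ⟨m, hm⟩ := h₂.2 v
      exact hrootS (by rw [hr]; exact hm ▸ hiter m)

end Rigidity

section Relabel
set_option linter.unusedSectionVars false

/-- Transport of a pebbling system along a bijection of the vertices. -/
def PebSys.map {V₁ V₂ : Type} (e : V₁ ≃ V₂) (T : PebSys V₁) : PebSys V₂ :=
  ⟨e T.root, fun v => e (T.parent (e.symm v))⟩

variable {V₁ V₂ : Type} [DecidableEq V₁] [DecidableEq V₂]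

theorem reach_map_down (e : V₁ ≃ V₂) {T : PebSys V₁} {k : ℕ} {P Q : Finset V₂}
    (h : Reach (PebSys.map e T) k P Q) :
    Reach T k (P.image e.symm) (Q.image e.symm) := by
  have himg : ∀ (S : Finset V₂) (x : V₁), x ∈ S.image e.symm ↔ e x ∈ S := by
    intro S x
    simp only [Finset.mem_image]
    constructor
    · rintro ⟨a, ha, rfl⟩; simpa using ha
    · intro hx; exact ⟨e x, hx, by simp⟩
  induction h with
  | refl hA hc =>
    exact .refl _ trivial (le_trans (Finset.card_image_le) hc)
  | @tail Q' R hQ' hs hA hc ih =>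
    obtain ⟨v, hshape, hin⟩ := hs
    refine ih.tail ⟨e.symm v, ?_, ?_⟩ trivial (le_trans (Finset.card_image_le) hc)
    · rcases hshape with ⟨hv, rfl⟩ | ⟨hv, rfl⟩
      · exact Or.inl ⟨fun hc' => hv (by simpa using (himg _ _).1 hc'),
          by rw [Finset.image_insert]⟩
      · exact Or.inr ⟨fun hc' => hv (by simpa using (himg _ _).1 hc'),
          by rw [Finset.image_insert]⟩
    · intro u hu hp
      refine (himg _ _).2 (hin (e u) ?_ ?_)
      · intro hc'
        exact hu (by rw [← hc']; simp)
      · show e (T.parent (e.symm (e u))) = v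
        rw [Equiv.symm_apply_apply, hp]
        simp
  
theorem map_map (e : V₁ ≃ V₂) (T : PebSys V₁) :
    PebSys.map e.symm (PebSys.map e T) = T := by
  refine PebSys.ext' (by simp [PebSys.map]) (funext fun v => ?_)
  simp [PebSys.map]

theorem revNum_map (e : V₁ ≃ V₂) (T : PebSys V₁) :
    revNum (PebSys.map e T) = revNum T := by
  refine (revNum_congr (T := PebSys.map e T) (T' := T) fun k => ⟨?_, ?_⟩)
  · intro h
    have := reach_map_down e h
    rwa [Finset.image_empty, Finset.image_singleton,
      show e.symm ((PebSys.map e T).root) = T.root by simp [PebSys.map]] at this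
  · intro h
    have h' : Reach (PebSys.map e.symm (PebSys.map e T)) k ∅ {T.root} := by
      rwa [map_map]
    have := reach_map_down e.symm h'
    rwa [Finset.image_empty, Finset.image_singleton, Equiv.symm_symm,
      show e T.root = (PebSys.map e T).root from rfl] at this

theorem isRDTree_map [Fintype V₁] [Fintype V₂] (e : V₁ ≃ V₂) {T : PebSys V₁}
    (hT : IsRDTree T) : IsRDTree (PebSys.map e T) := by
  have hiter : ∀ n v, (PebSys.map e T).parent^[n] v = e (T.parent^[n] (e.symm v)) := by
    intro n
    induction n with
    | zero => intro v; simp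
    | succ n ih =>
      intro v
      rw [Function.iterate_succ_apply, Function.iterate_succ_apply]
      rw [ih]
      show e (T.parent^[n] (e.symm (e (T.parent (e.symm v))))) = _
      rw [Equiv.symm_apply_apply]
  constructor
  · show e (T.parent (e.symm (e T.root))) = e T.root
    rw [Equiv.symm_apply_apply, hT.1]
  · intro v
    obtain ⟨n, hn⟩ := hT.2 (e.symm v)
    exact ⟨n, by rw [hiter, hn]; rfl⟩

theorem undirG_map_adj (e : V₁ ≃ V₂) (T : PebSys V₁) (u v : V₂) :
    (undirG (PebSys.map e T)).Adj u v ↔ (undirG T).Adj (e.symm u) (e.symm v) := by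
  unfold undirG
  rw [SimpleGraph.fromRel_adj, SimpleGraph.fromRel_adj]
  constructor
  · rintro ⟨huv, h | h⟩
    · exact ⟨fun hc => huv (by simpa using congrArg e hc),
        Or.inl (by rw [← h]; simp [PebSys.map])⟩
    · exact ⟨fun hc => huv (by simpa using congrArg e hc),
        Or.inr (by rw [← h]; simp [PebSys.map])⟩
  · rintro ⟨huv, h | h⟩
    · refine ⟨fun hc => huv (by rw [hc]), Or.inl ?_⟩
      show e (T.parent (e.symm u)) = v
      rw [h]; simp
    · refine ⟨fun hc => huv (by rw [hc]), Or.inr ?_⟩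
      show e (T.parent (e.symm v)) = u
      rw [h]; simp

end Relabel
section Assemble
set_option linter.unusedSectionVars false
variable {V : Type} [Fintype V] [DecidableEq V]

/-- Two rooted directed trees on the same vertex set with the same underlying
undirected graph have the same persistent pebbling number. -/
theorem revNum_eq_of_same_graph :
    ∀ (m : ℕ) (T T'' : PebSys V), IsRDTree T → IsRDTree T'' →
      undirG T = undirG T'' → T''.parent^[m] T.root = T''.root →
      revNum T = revNum T'' := by
  intro m
  induction m with
  | zero =>
    intro T T'' hT hT'' hG hm
    simp only [Function.iterate_zero, id_eq] at hm
    rw [eq_of_same_graph_root hT hT'' hG hm]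
  | succ m ih =>
    intro T T'' hT hT'' hG hm
    by_cases hroots : T.root = T''.root
    · rw [eq_of_same_graph_root hT hT'' hG hroots]
    · set w := T''.parent T.root with hw
      have hwne : w ≠ T.root := by
        intro hfix
        exact hroots (root_unique_fixed hT'' hfix)
      have hadj'' : (undirG T'').Adj T.root w := by
        unfold undirG
        rw [SimpleGraph.fromRel_adj]
        exact ⟨Ne.symm hwne, Or.inl rfl⟩
      have hadj : (undirG T).Adj T.root w := by rw [hG]; exact hadj''
      have hpw : T.parent w = T.root := by
        unfold undirG at hadj
        rw [SimpleGraph.fromRel_adj] at hadj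
        rcases hadj.2 with h | h
        · exact absurd (hT.1.symm.trans h) (Ne.symm hwne)
        · exact h
      have hrw : revNum (reroot T w) = revNum T := revNum_reroot_eq hT hpw hwne
      have hT₃ : IsRDTree (reroot T w) := isRDTree_reroot hT hpw hwne
      have hG₃ : undirG (reroot T w) = undirG T'' :=
        (undirG_reroot hT.1 hpw hwne).trans hG
      have hm₃ : T''.parent^[m] (reroot T w).root = T''.root := by
        show T''.parent^[m] w = T''.root
        rw [hw, ← Function.iterate_succ_apply]
        exact hm
      rw [← hrw]
      exact ih (reroot T w) T'' hT₃ hT'' hG₃ hm₃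

end Assemble

/-- If two rooted directed trees have isomorphic underlying
undirected trees, then they have the same persistent reversible pebbling
number: `rev` does not depend on edge orientations or the choice of root. -/
theorem rev_eq_of_undir_iso {V₁ V₂ : Type} [Fintype V₁] [DecidableEq V₁]
    [Fintype V₂] [DecidableEq V₂] (T₁ : PebSys V₁) (T₂ : PebSys V₂)
    (h₁ : IsRDTree T₁) (h₂ : IsRDTree T₂)
    (hiso : Nonempty (undirG T₁ ≃g undirG T₂)) :
    revNum T₁ = revNum T₂ := by
  obtain ⟨e⟩ := hiso
  set f : V₁ ≃ V₂ := e.toEquiv with hf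
  -- transport `T₂` to the vertex set `V₁`
  set T₂' : PebSys V₁ := PebSys.map f.symm T₂ with hT₂'
  have hRD₂' : IsRDTree T₂' := isRDTree_map f.symm h₂
  have hGeq : undirG T₂' = undirG T₁ := by
    ext u v
    rw [undirG_map_adj f.symm T₂ u v]
    show (undirG T₂).Adj (f.symm.symm u) (f.symm.symm v) ↔ _
    rw [Equiv.symm_symm]
    have := e.map_rel_iff (a := u) (b := v)
    exact this
  have hrev₂' : revNum T₂' = revNum T₂ := revNum_map f.symm T₂
  obtain ⟨m, hm⟩ := hRD₂'.2 T₁.root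
  have := revNum_eq_of_same_graph m T₁ T₂' h₁ hRD₂' hGeq.symm hm
  rw [this, hrev₂']
end

section
/- Let T be a rooted directed tree whose root r has exactly one in-neighbor (i.e., r is a leaf of the underlying undirected tree), and let T' be the subtree of T rooted at the unique child-in-neighbor of r. Then for every positive integer k, rev(T) ≤ k if and only if vrev(T') ≤ k − 1. -/
section Helpers

lemma mem_of_getLast?' {α : Type*} {l : List α} {a : α} (h : l.getLast? = some a) : a ∈ l := by
  obtain ⟨l', rfl⟩ := List.getLast?_eq_some_iff.mp h
  simp

lemma chain'_strengthen {α : Type*} {R : α → α → Prop} {p : α → Prop} :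
    ∀ {L : List α}, L.Chain' R → (∀ x ∈ L, p x) →
      L.Chain' (fun a b => R a b ∧ p a ∧ p b)
  | [], _, _ => List.isChain_nil
  | [a], _, _ => List.isChain_singleton a
  | a :: b :: l, hc, hp => by
    unfold List.Chain' at hc ⊢
    rw [List.isChain_cons_cons] at hc ⊢
    exact ⟨⟨hc.1, hp a (by simp), hp b (by simp)⟩,
      chain'_strengthen hc.2 fun x hx => hp x (List.mem_cons_of_mem a hx)⟩

variable {V : Type} [DecidableEq V]

lemma pebStep_symm (T : PebSys V) {P Q : Finset V} (h : PebStep T P Q) : PebStep T Q P := by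
  obtain ⟨v, hv, hin⟩ := h
  rcases hv with ⟨h1, h2⟩ | ⟨h1, h2⟩
  · exact ⟨v, Or.inr ⟨h1, h2⟩, fun u hu hp => by
      rw [h2]; exact Finset.mem_insert_of_mem (hin u hu hp)⟩
  · refine ⟨v, Or.inl ⟨h1, h2⟩, fun u hu hp => ?_⟩
    have := hin u hu hp
    rw [h2] at this
    rcases Finset.mem_insert.mp this with h | h
    · exact absurd h hu
    · exact h

lemma pebSpace_le_iff {L : List (Finset V)} {k : ℕ} :
    pebSpace L ≤ k ↔ ∀ P ∈ L, P.card ≤ k := by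
  induction L with
  | nil => simp [pebSpace]
  | cons a l ih =>
    simp only [pebSpace, List.map_cons, List.foldr_cons, max_le_iff, List.mem_cons] at *
    constructor
    · rintro ⟨h1, h2⟩ P (rfl | hP)
      · exact h1
      · exact ih.mp h2 P hP
    · intro h
      exact ⟨h a (Or.inl rfl), ih.mpr fun P hP => h P (Or.inr hP)⟩

/-- Reachability between configurations by legal moves, with a space bound. -/
def ReachB (T : PebSys V) (n : ℕ) (A B : Finset V) : Prop :=
  ∃ L : List (Finset V), L.head? = some A ∧ L.getLast? = some B ∧
    L.Chain' (PebStep T) ∧ ∀ P ∈ L, P.card ≤ n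

lemma ReachB.refl {T : PebSys V} {n : ℕ} {A : Finset V} (h : A.card ≤ n) : ReachB T n A A :=
  ⟨[A], rfl, by simp, List.isChain_singleton A, by simpa⟩

lemma ReachB.single {T : PebSys V} {n : ℕ} {A B : Finset V} (h : PebStep T A B)
    (hA : A.card ≤ n) (hB : B.card ≤ n) : ReachB T n A B :=
  ⟨[A, B], rfl, by simp, List.isChain_pair.mpr h, by
    intro P hP
    rcases List.mem_cons.mp hP with rfl | hP
    · exact hA
    · simp only [List.mem_singleton] at hP; subst hP; exact hB⟩

lemma ReachB.trans' {T : PebSys V} {n : ℕ} {A B C : Finset V}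
    (h1 : ReachB T n A B) (h2 : ReachB T n B C) :
    ∃ L : List (Finset V), L.head? = some A ∧ L.getLast? = some C ∧
      L.Chain' (PebStep T) ∧ (∀ P ∈ L, P.card ≤ n) ∧ B ∈ L := by
  obtain ⟨L1, e1, e2, e3, e4⟩ := h1
  obtain ⟨L2, f1, f2, f3, f4⟩ := h2
  obtain ⟨t, rfl⟩ : ∃ t, L2 = B :: t := by
    cases L2 with
    | nil => simp at f1
    | cons x t =>
      obtain rfl : x = B := by simpa using f1
      exact ⟨t, rfl⟩
  obtain ⟨s1, rfl⟩ : ∃ s1, L1 = A :: s1 := by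
    cases L1 with
    | nil => simp at e1
    | cons x s1 =>
      obtain rfl : x = A := by simpa using e1
      exact ⟨s1, rfl⟩
  refine ⟨(A :: s1) ++ t, rfl, ?_, ?_, ?_, ?_⟩
  · cases t with
    | nil =>
      obtain rfl : B = C := by simpa using f2
      simpa using e2
    | cons x t' =>
      rw [List.getLast?_append_of_ne_nil _ (by simp)]
      rw [List.getLast?_cons_cons] at f2
      exact f2
  · refine List.IsChain.append e3 (List.isChain_cons.mp f3).2 ?_
    intro x hx y hy
    have hxB : B = x := by rw [e2] at hx; simpa using hx
    subst hxB
    exact (List.isChain_cons.mp f3).1 y hy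
  · intro P hP
    rcases List.mem_append.mp hP with hP | hP
    · exact e4 P hP
    · exact f4 P (List.mem_cons_of_mem B hP)
  · exact List.mem_append.mpr (Or.inl (mem_of_getLast?' e2))

lemma ReachB.trans {T : PebSys V} {n : ℕ} {A B C : Finset V}
    (h1 : ReachB T n A B) (h2 : ReachB T n B C) : ReachB T n A C := by
  obtain ⟨L, e1, e2, e3, e4, _⟩ := h1.trans' h2
  exact ⟨L, e1, e2, e3, e4⟩

lemma ReachB.symm {T : PebSys V} {n : ℕ} {A B : Finset V} (h : ReachB T n A B) :
    ReachB T n B A := by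
  obtain ⟨L, e1, e2, e3, e4⟩ := h
  refine ⟨L.reverse, ?_, ?_, ?_, ?_⟩
  · rw [List.head?_reverse]; exact e2
  · rw [List.getLast?_reverse]; exact e1
  · unfold List.Chain'
    rw [List.isChain_reverse]
    exact e3.imp fun {a b} hab => pebStep_symm T hab
  · simpa using e4

lemma ReachB.mono {T : PebSys V} {n m : ℕ} {A B : Finset V} (h : ReachB T n A B)
    (hnm : n ≤ m) : ReachB T m A B := by
  obtain ⟨L, e1, e2, e3, e4⟩ := h
  exact ⟨L, e1, e2, e3, fun P hP => (e4 P hP).trans hnm⟩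

lemma ReachB.map {W : Type} [DecidableEq W] {T : PebSys V} {S : PebSys W} {n m : ℕ}
    {A B : Finset V} (f : Finset V → Finset W)
    (hf : ∀ P Q : Finset V, PebStep T P Q → PebStep S (f P) (f Q))
    (hcard : ∀ P : Finset V, P.card ≤ n → (f P).card ≤ m)
    (h : ReachB T n A B) : ReachB S m (f A) (f B) := by
  obtain ⟨L, e1, e2, e3, e4⟩ := h
  refine ⟨L.map f, ?_, ?_, ?_, ?_⟩
  · rw [List.head?_map, e1]; rfl
  · rw [List.getLast?_map, e2]; rfl
  · exact (List.isChain_map f).mpr (e3.imp fun {a b} hab => hf a b hab)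
  · intro P hP
    obtain ⟨Q, hQ, rfl⟩ := List.mem_map.mp hP
    exact hcard Q (e4 Q hQ)

end Helpers
section Depth

variable {V : Type} [Fintype V] [DecidableEq V]

/-- Depth of a vertex: number of parent steps to reach the root. -/
def pdepth (T : PebSys V) (hT : IsRDTree T) (v : V) : ℕ := Nat.find (hT.2 v)

lemma pdepth_spec (T : PebSys V) (hT : IsRDTree T) (v : V) :
    T.parent^[pdepth T hT v] v = T.root := Nat.find_spec (hT.2 v)

lemma pdepth_eq_zero_iff (T : PebSys V) (hT : IsRDTree T) (v : V) :
    pdepth T hT v = 0 ↔ v = T.root := by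
  rw [pdepth, Nat.find_eq_zero]
  simp

lemma pdepth_parent_lt (T : PebSys V) (hT : IsRDTree T) {v : V} (hv : v ≠ T.root) :
    pdepth T hT (T.parent v) < pdepth T hT v := by
  have h0 : pdepth T hT v ≠ 0 := fun h => hv ((pdepth_eq_zero_iff T hT v).mp h)
  have hsp : T.parent^[pdepth T hT v - 1] (T.parent v) = T.root := by
    rw [← Function.iterate_succ_apply, Nat.succ_eq_add_one,
      Nat.sub_add_cancel (Nat.one_le_iff_ne_zero.mpr h0)]
    exact pdepth_spec T hT v
  calc pdepth T hT (T.parent v) ≤ pdepth T hT v - 1 := Nat.find_min' _ hsp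
    _ < pdepth T hT v := by omega

lemma pdepth_lt_of_inNbr (T : PebSys V) (hT : IsRDTree T) {u v : V} (hu : u ≠ v)
    (hp : T.parent u = v) : pdepth T hT v < pdepth T hT u := by
  have hur : u ≠ T.root := by
    rintro rfl
    rw [hT.1] at hp
    exact hu hp
  have := pdepth_parent_lt T hT hur
  rwa [hp] at this

/-- The set of vertices of depth at least `d`. -/
def lev (T : PebSys V) (hT : IsRDTree T) (d : ℕ) : Finset V :=
  Finset.univ.filter (fun v => d ≤ pdepth T hT v)

lemma step_insert_high (T : PebSys V) (hT : IsRDTree T) {C : Finset V} {v : V} (hv : v ∉ C)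
    (hsub : lev T hT (pdepth T hT v + 1) ⊆ C) : PebStep T C (insert v C) := by
  refine ⟨v, Or.inl ⟨hv, rfl⟩, fun u hu hp => hsub ?_⟩
  simp only [lev, Finset.mem_filter, Finset.mem_univ, true_and]
  exact pdepth_lt_of_inNbr T hT hu hp

lemma lev_split (T : PebSys V) (hT : IsRDTree T) (d : ℕ) :
    lev T hT (d+1) ∪ Finset.univ.filter (fun v => pdepth T hT v = d) = lev T hT d := by
  ext v
  simp only [lev, Finset.mem_union, Finset.mem_filter, Finset.mem_univ, true_and]
  omega

lemma chain_fill (T : PebSys V) (hT : IsRDTree T) (d : ℕ) (B : Finset V)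
    (hB : ∀ v ∈ B, pdepth T hT v ≠ d) (F : Finset V) :
    (∀ v ∈ F, pdepth T hT v = d) →
    ReachB T (Fintype.card V) (B ∪ lev T hT (d+1)) (B ∪ lev T hT (d+1) ∪ F) := by
  induction F using Finset.induction_on with
  | empty =>
    intro _
    rw [Finset.union_empty]
    exact ReachB.refl (Finset.card_le_univ _)
  | @insert a F ha ih =>
    intro hF
    have hFd : ∀ v ∈ F, pdepth T hT v = d := fun v hv => hF v (Finset.mem_insert_of_mem hv)
    have had : pdepth T hT a = d := hF a (Finset.mem_insert_self a F)
    refine (ih hFd).trans ?_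
    have haX : a ∉ B ∪ lev T hT (d+1) ∪ F := by
      simp only [Finset.mem_union, lev, Finset.mem_filter, Finset.mem_univ, true_and]
      push_neg
      refine ⟨⟨fun h => hB a h had, by omega⟩, ha⟩
    have hstep : PebStep T (B ∪ lev T hT (d+1) ∪ F)
        (insert a (B ∪ lev T hT (d+1) ∪ F)) := by
      apply step_insert_high T hT haX
      rw [had]
      intro x hx
      exact Finset.mem_union_left _ (Finset.mem_union_right _ hx)
    have heq : insert a (B ∪ lev T hT (d+1) ∪ F) = B ∪ lev T hT (d+1) ∪ insert a F := by
      rw [Finset.union_insert]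
    rw [← heq]
    exact ReachB.single hstep (Finset.card_le_univ _) (Finset.card_le_univ _)

lemma chain_down (T : PebSys V) (hT : IsRDTree T) (B : Finset V)
    (hB : ∀ v ∈ B, pdepth T hT v = 0) :
    ∀ j, j ≤ Finset.univ.sup (pdepth T hT) →
      ReachB T (Fintype.card V) B
        (B ∪ lev T hT (Finset.univ.sup (pdepth T hT) + 1 - j)) := by
  set D := Finset.univ.sup (pdepth T hT) with hD
  intro j
  induction j with
  | zero =>
    intro _
    have hempty : lev T hT (D + 1 - 0) = ∅ := by
      ext v
      simp only [lev, Finset.mem_filter, Finset.mem_univ, true_and, Finset.notMem_empty,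
        iff_false, not_le]
      have : pdepth T hT v ≤ D := Finset.le_sup (Finset.mem_univ v)
      omega
    rw [hempty, Finset.union_empty]
    exact ReachB.refl (Finset.card_le_univ _)
  | succ j ih =>
    intro hj
    have hj' : j ≤ D := by omega
    have harith : D + 1 - j = (D + 1 - (j+1)) + 1 := by omega
    have hd1 : 1 ≤ D + 1 - (j+1) := by omega
    refine (ih hj').trans ?_
    rw [harith]
    have := chain_fill T hT (D + 1 - (j+1)) B
      (fun v hv => by rw [hB v hv]; omega)
      (Finset.univ.filter (fun v => pdepth T hT v = D + 1 - (j+1)))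
      (fun v hv => (Finset.mem_filter.mp hv).2)
    rwa [Finset.union_assoc, lev_split] at this

lemma exists_full (T : PebSys V) (hT : IsRDTree T) :
    ReachB T (Fintype.card V) ∅ {T.root} := by
  set D := Finset.univ.sup (pdepth T hT) with hD
  have harith : D + 1 - D = 1 := by omega
  have h1 : ReachB T (Fintype.card V) ∅ (lev T hT 1) := by
    have := chain_down T hT ∅ (by simp) D le_rfl
    rwa [harith, Finset.empty_union] at this
  have hrd : pdepth T hT T.root = 0 := (pdepth_eq_zero_iff T hT T.root).mpr rfl
  have hrn : T.root ∉ lev T hT 1 := by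
    simp [lev, hrd]
  have hstep : PebStep T (lev T hT 1) (insert T.root (lev T hT 1)) := by
    apply step_insert_high T hT hrn
    rw [hrd]
  have huniv : insert T.root (lev T hT 1) = Finset.univ := by
    ext v
    simp only [Finset.mem_insert, lev, Finset.mem_filter, Finset.mem_univ, true_and, iff_true]
    rcases eq_or_ne v T.root with h | h
    · exact Or.inl h
    · right
      have : pdepth T hT v ≠ 0 := fun h0 => h ((pdepth_eq_zero_iff T hT v).mp h0)
      omega
  have h2 : ReachB T (Fintype.card V) {T.root} Finset.univ := by
    have := chain_down T hT {T.root} (by simpa using hrd) D le_rfl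
    rwa [harith, ← Finset.insert_eq, huniv] at this
  refine (h1.trans (ReachB.single hstep (Finset.card_le_univ _) (Finset.card_le_univ _))).trans ?_
  rw [huniv]
  exact h2.symm

end Depth
section Lifting

variable {V : Type} [DecidableEq V]

/-- Embed a configuration on the non-root vertices into a configuration on `V`. -/
def liftF (T : PebSys V) (P : Finset {v : V // v ≠ T.root}) : Finset V :=
  P.map ⟨Subtype.val, Subtype.val_injective⟩

/-- Restrict a configuration on `V` to the non-root vertices. -/
def resF (T : PebSys V) (P : Finset V) : Finset {v : V // v ≠ T.root} :=
  P.subtype (· ≠ T.root)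

lemma root_not_mem_liftF (T : PebSys V) (P : Finset {v : V // v ≠ T.root}) :
    T.root ∉ liftF T P := by
  simp only [liftF, Finset.mem_map, Function.Embedding.coeFn_mk]
  rintro ⟨a, _, h⟩
  exact a.2 h

lemma card_liftF (T : PebSys V) (P : Finset {v : V // v ≠ T.root}) :
    (liftF T P).card = P.card := Finset.card_map _

lemma liftF_empty (T : PebSys V) : liftF T ∅ = ∅ := rfl

lemma liftF_insert (T : PebSys V) (v : {v : V // v ≠ T.root})
    (P : Finset {v : V // v ≠ T.root}) :
    liftF T (insert v P) = insert v.val (liftF T P) := Finset.map_insert _ _ _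

lemma val_mem_liftF_iff (T : PebSys V) (v : {v : V // v ≠ T.root})
    (P : Finset {v : V // v ≠ T.root}) : v.val ∈ liftF T P ↔ v ∈ P :=
  Finset.mem_map' _

lemma mem_resF (T : PebSys V) (a : {v : V // v ≠ T.root}) (P : Finset V) :
    a ∈ resF T P ↔ a.val ∈ P := Finset.mem_subtype

lemma resF_insert (T : PebSys V) {v : V} (hv : v ≠ T.root) (P : Finset V) :
    resF T (insert v P) = insert ⟨v, hv⟩ (resF T P) := by
  ext a
  simp only [resF, Finset.mem_subtype, Finset.mem_insert, Subtype.ext_iff]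

lemma resF_root_singleton (T : PebSys V) : resF T ({T.root} : Finset V) = ∅ := by
  ext a
  simp only [resF, Finset.mem_subtype, Finset.mem_singleton, Finset.notMem_empty, iff_false]
  exact a.2

lemma card_resF (T : PebSys V) {P : Finset V} (h : T.root ∈ P) :
    (resF T P).card = P.card - 1 := by
  rw [resF, Finset.card_subtype, Finset.filter_ne', Finset.card_erase_of_mem h]

variable (T : PebSys V) (T' : PebSys {v : V // v ≠ T.root})

lemma parent_iff (hparent : ∀ v : {v : V // v ≠ T.root},
      (T'.parent v : V) = if T.parent v.val = T.root then v.val else T.parent v.val)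
    (u v : {v : V // v ≠ T.root}) :
    (u ≠ v ∧ T'.parent u = v) ↔ (u.val ≠ v.val ∧ T.parent u.val = v.val) := by
  constructor
  · rintro ⟨huv, hpu⟩
    have hval : (T'.parent u).val = v.val := congrArg Subtype.val hpu
    rw [hparent u] at hval
    by_cases h : T.parent u.val = T.root
    · rw [if_pos h] at hval
      exact absurd (Subtype.ext hval) huv
    · rw [if_neg h] at hval
      exact ⟨fun he => huv (Subtype.ext he), hval⟩
  · rintro ⟨huv, hpu⟩
    have h : ¬ T.parent u.val = T.root := by rw [hpu]; exact v.2
    refine ⟨fun he => huv (congrArg Subtype.val he), Subtype.ext ?_⟩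
    rw [hparent u, if_neg h, hpu]

lemma step_lift (hparent : ∀ v : {v : V // v ≠ T.root},
      (T'.parent v : V) = if T.parent v.val = T.root then v.val else T.parent v.val)
    (hT1 : T.parent T.root = T.root)
    {P Q : Finset {v : V // v ≠ T.root}} (h : PebStep T' P Q) :
    PebStep T (liftF T P) (liftF T Q) := by
  obtain ⟨v, hv, hin⟩ := h
  refine ⟨v.val, ?_, ?_⟩
  · rcases hv with ⟨h1, h2⟩ | ⟨h1, h2⟩
    · exact Or.inl ⟨fun hm => h1 ((val_mem_liftF_iff T v P).mp hm),
        by rw [h2, liftF_insert]⟩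
    · exact Or.inr ⟨fun hm => h1 ((val_mem_liftF_iff T v Q).mp hm),
        by rw [h2, liftF_insert]⟩
  · intro u hu hp
    have hur : u ≠ T.root := by
      rintro rfl
      rw [hT1] at hp
      exact v.2 hp.symm
    have := (parent_iff T T' hparent ⟨u, hur⟩ v).mpr ⟨hu, hp⟩
    have hm := hin ⟨u, hur⟩ this.1 this.2
    exact Finset.mem_map_of_mem _ hm

lemma step_insert_notmem {T₀ : PebSys V} {P Q : Finset V} {r : V} (hP : r ∉ P) (hQ : r ∉ Q)
    (h : PebStep T₀ P Q) : PebStep T₀ (insert r P) (insert r Q) := by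
  obtain ⟨v, hv, hin⟩ := h
  refine ⟨v, ?_, fun u hu hp => Finset.mem_insert_of_mem (hin u hu hp)⟩
  rcases hv with ⟨h1, h2⟩ | ⟨h1, h2⟩
  · have hvr : v ≠ r := by rintro rfl; exact hQ (h2 ▸ Finset.mem_insert_self v P)
    refine Or.inl ⟨?_, by rw [h2]; ext x; simp only [Finset.mem_insert]; tauto⟩
    simp [Finset.mem_insert, hvr, h1]
  · have hvr : v ≠ r := by rintro rfl; exact hP (h2 ▸ Finset.mem_insert_self v Q)
    refine Or.inr ⟨?_, by rw [h2]; ext x; simp only [Finset.mem_insert]; tauto⟩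
    simp [Finset.mem_insert, hvr, h1]

lemma step_res (hparent : ∀ v : {v : V // v ≠ T.root},
      (T'.parent v : V) = if T.parent v.val = T.root then v.val else T.parent v.val)
    {P Q : Finset V} (hrP : T.root ∈ P) (hrQ : T.root ∈ Q)
    (h : PebStep T P Q) : PebStep T' (resF T P) (resF T Q) := by
  obtain ⟨v, hv, hin⟩ := h
  have hvr : v ≠ T.root := by
    rcases hv with ⟨h1, _⟩ | ⟨h1, _⟩ <;> rintro rfl
    · exact h1 hrP
    · exact h1 hrQ
  refine ⟨⟨v, hvr⟩, ?_, ?_⟩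
  · rcases hv with ⟨h1, h2⟩ | ⟨h1, h2⟩
    · refine Or.inl ⟨?_, by rw [h2, resF_insert T hvr]⟩
      rw [mem_resF]
      exact h1
    · refine Or.inr ⟨?_, by rw [h2, resF_insert T hvr]⟩
      rw [mem_resF]
      exact h1
  · intro u hu hp
    have := (parent_iff T T' hparent u ⟨v, hvr⟩).mp ⟨hu, hp⟩
    rw [mem_resF]
    exact hin u.val this.1 this.2

end Lifting

section FindSuffix

variable {V : Type} [DecidableEq V]

lemma find_suffix (T : PebSys V) {c : V} (hc1 : c ≠ T.root) (hc2 : T.parent c = T.root) :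
    ∀ L : List (Finset V), L.Chain' (PebStep T) → ∀ Z : Finset V,
      L.getLast? = some Z → T.root ∈ Z →
      (∀ P ∈ L, T.root ∈ P) ∨
      ∃ M Q, M <:+ L ∧ M.head? = some Q ∧ c ∈ Q ∧ (∀ P ∈ M, T.root ∈ P) ∧
        M.getLast? = some Z
  | [] => by intro _ Z hZ _; simp at hZ
  | [A] => by
    intro _ Z hZ hr
    left
    intro P hP
    simp only [List.mem_singleton] at hP
    subst hP
    obtain rfl : P = Z := by simpa using hZ
    exact hr
  | A :: B :: L => by
    intro hch Z hZ hr
    rw [List.getLast?_cons_cons] at hZ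
    unfold List.Chain' at hch
    rw [List.isChain_cons_cons] at hch
    rcases find_suffix T hc1 hc2 (B :: L) hch.2 Z hZ hr with hall |
      ⟨M, Q, hsuf, hh, hcQ, hallM, hlM⟩
    · by_cases hA : T.root ∈ A
      · left
        intro P hP
        rcases List.mem_cons.mp hP with rfl | hP
        · exact hA
        · exact hall P hP
      · right
        have hB : T.root ∈ B := hall B (List.mem_cons_self)
        obtain ⟨v, hv, hin⟩ := hch.1
        rcases hv with ⟨h1, h2⟩ | ⟨h1, h2⟩
        · -- B = insert v A
          have hvr : v = T.root := by
            rcases Finset.mem_insert.mp (h2 ▸ hB) with h | h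
            · exact h.symm
            · exact absurd h hA
          subst hvr
          have hcA : c ∈ A := hin c hc1 hc2
          have hcB : c ∈ B := by rw [h2]; exact Finset.mem_insert_of_mem hcA
          exact ⟨B :: L, B, ⟨[A], rfl⟩, rfl, hcB, hall, hZ⟩
        · -- A = insert v B: impossible since root ∈ B ⊆ A
          exfalso
          apply hA
          rw [h2]
          exact Finset.mem_insert_of_mem hB
    · right
      exact ⟨M, Q, hsuf.trans (List.suffix_cons A (B :: L)), hh, hcQ, hallM, hlM⟩

end FindSuffix
section SubtreeTree

variable {V : Type} [Fintype V] [DecidableEq V]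

lemma subtree_isRDTree (T : PebSys V) (hT : IsRDTree T) (c : V)
    (hc : c ≠ T.root ∧ T.parent c = T.root)
    (huniq : ∀ u : V, u ≠ T.root → T.parent u = T.root → u = c)
    (T' : PebSys {v : V // v ≠ T.root})
    (hroot : (T'.root : V) = c)
    (hparent : ∀ v : {v : V // v ≠ T.root},
      (T'.parent v : V) = if T.parent v.val = T.root then v.val else T.parent v.val) :
    IsRDTree T' := by
  constructor
  · apply Subtype.ext
    rw [hparent, hroot, if_pos hc.2]
  · intro v
    set n := Nat.find (hT.2 v.val) with hn
    have hspec : T.parent^[n] v.val = T.root := Nat.find_spec (hT.2 v.val)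
    have hmin : ∀ m, m < n → T.parent^[m] v.val ≠ T.root :=
      fun m hm => Nat.find_min (hT.2 v.val) hm
    have hpos : 1 ≤ n := by
      rcases Nat.eq_zero_or_pos n with h | h
      · rw [h] at hspec
        simp only [Function.iterate_zero_apply] at hspec
        exact absurd hspec v.2
      · exact h
    have key : ∀ i, i < n → (T'.parent^[i] v).val = T.parent^[i] v.val := by
      intro i
      induction i with
      | zero => intro _; simp
      | succ i ih =>
        intro hi
        have hi' : i < n := by omega
        rw [Function.iterate_succ_apply', Function.iterate_succ_apply']
        rw [hparent, ih hi']
        have hne : T.parent (T.parent^[i] v.val) ≠ T.root := by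
          have he : T.parent^[i+1] v.val = T.parent (T.parent^[i] v.val) :=
            Function.iterate_succ_apply' T.parent i v.val
          rw [← he]
          exact hmin (i+1) hi
        rw [if_neg hne]
    refine ⟨n - 1, Subtype.ext ?_⟩
    rw [key (n-1) (by omega), hroot]
    apply huniq
    · exact hmin (n-1) (by omega)
    · have he : T.parent^[(n-1)+1] v.val = T.parent (T.parent^[n-1] v.val) :=
        Function.iterate_succ_apply' T.parent (n-1) v.val
      rw [← he, Nat.sub_add_cancel hpos]
      exact hspec

end SubtreeTree

/-- Let `T` be a rooted directed tree whose root has exactly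
one in-neighbour `c` (so the root is a leaf of the underlying undirected
tree), and let `T'` be the subtree of `T` rooted at `c`, i.e. the rooted
directed tree on the vertices of `T` other than the root, with root `c` and
the parent function inherited from `T`.  Then for every positive integer `k`,
`rev(T) ≤ k ↔ vrev(T') ≤ k - 1`. -/
theorem rev_le_iff_vrev_subtree_le {V : Type} [Fintype V] [DecidableEq V]
    (T : PebSys V) (hT : IsRDTree T) (c : V)
    (hc : c ≠ T.root ∧ T.parent c = T.root)
    (huniq : ∀ u : V, u ≠ T.root → T.parent u = T.root → u = c)
    (T' : PebSys {v : V // v ≠ T.root})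
    (hroot : (T'.root : V) = c)
    (hparent : ∀ v : {v : V // v ≠ T.root},
      (T'.parent v : V) = if T.parent v.val = T.root then v.val else T.parent v.val)
    (k : ℕ) (hk : 0 < k) :
    revNum T ≤ k ↔ vrevNum T' ≤ k - 1 := by
  obtain ⟨hc1, hc2⟩ := hc
  have hT' : IsRDTree T' := subtree_isRDTree T hT c ⟨hc1, hc2⟩ huniq T' hroot hparent
  constructor
  · -- rev ≤ k → vrev ≤ k - 1
    intro h
    have hne : Set.Nonempty {m | ∃ L : List (Finset V), IsPebbling T L ∧ pebSpace L ≤ m} := by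
      obtain ⟨L, e1, e2, e3, _⟩ := exists_full T hT
      exact ⟨pebSpace L, L, ⟨e1, e2, e3⟩, le_rfl⟩
    have hmem := Nat.sInf_mem hne
    obtain ⟨L, ⟨e1, e2, e3⟩, hsp⟩ := hmem
    have hcard : ∀ P ∈ L, P.card ≤ k := pebSpace_le_iff.mp (le_trans hsp h)
    rcases find_suffix T hc1 hc2 L e3 {T.root} e2 (Finset.mem_singleton_self T.root) with
      hall | ⟨M, Q, hsuf, hhead, hcQ, hallM, hlastM⟩
    · exfalso
      have hmemL : (∅ : Finset V) ∈ L := List.mem_of_mem_head? (by rw [e1]; rfl)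
      simpa using hall ∅ hmemL
    · have R1 : ReachB T' (k-1) (resF T Q) ∅ := by
        refine ⟨M.map (resF T), ?_, ?_, ?_, ?_⟩
        · rw [List.head?_map, hhead]; rfl
        · rw [List.getLast?_map, hlastM, Option.map_some, resF_root_singleton]
        · have hc' : M.Chain' (PebStep T) := e3.suffix hsuf
          have hstr := chain'_strengthen hc' hallM
          exact (List.isChain_map _).mpr
            (hstr.imp fun {a b} hab => step_res T T' hparent hab.2.1 hab.2.2 hab.1)
        · intro P hP
          obtain ⟨P0, hP0, rfl⟩ := List.mem_map.mp hP
          have h1 : P0.card ≤ k := hcard P0 (hsuf.subset hP0)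
          have h2 : T.root ∈ P0 := hallM P0 hP0
          rw [card_resF T h2]
          omega
      obtain ⟨L'', f1, f2, f3, f4, f5⟩ := R1.symm.trans' R1
      apply Nat.sInf_le
      refine ⟨L'', ⟨f1, f2, ⟨resF T Q, f5, ?_⟩, f3⟩, pebSpace_le_iff.mpr f4⟩
      rw [mem_resF, hroot]
      exact hcQ
  · -- vrev ≤ k - 1 → rev ≤ k
    intro h
    have hne : Set.Nonempty
        {m | ∃ L : List (Finset {v : V // v ≠ T.root}), IsVisPebbling T' L ∧ pebSpace L ≤ m} := by
      have full' := exists_full T' hT'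
      obtain ⟨L, e1, e2, e3, _, e5⟩ := full'.trans' full'.symm
      exact ⟨pebSpace L, L, ⟨e1, e2, ⟨{T'.root}, e5, Finset.mem_singleton_self _⟩, e3⟩, le_rfl⟩
    obtain ⟨L', ⟨e1, e2, ⟨Pstar, hPmem, hPc⟩, e3⟩, hsp⟩ := Nat.sInf_mem hne
    have hcard : ∀ P ∈ L', P.card ≤ k - 1 := pebSpace_le_iff.mp (le_trans hsp h)
    obtain ⟨s, t, rfl⟩ := List.append_of_mem hPmem
    have hpre : (s ++ [Pstar]) <+: (s ++ Pstar :: t) := ⟨t, by simp⟩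
    have R1 : ReachB T' (k-1) ∅ Pstar := by
      refine ⟨s ++ [Pstar], ?_, List.getLast?_concat, e3.prefix hpre, ?_⟩
      · cases s with
        | nil =>
          obtain rfl : Pstar = ∅ := by simpa using e1
          rfl
        | cons a s' =>
          obtain rfl : a = ∅ := by simpa using e1
          rfl
      · intro P hP
        exact hcard P (hpre.subset hP)
    have R2 : ReachB T' (k-1) Pstar ∅ := by
      refine ⟨Pstar :: t, rfl, ?_, e3.suffix ⟨s, rfl⟩, ?_⟩
      · rw [← List.getLast?_append_of_ne_nil s (List.cons_ne_nil Pstar t)]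
        exact e2
      · intro P hP
        exact hcard P (List.mem_append.mpr (Or.inr hP))
    have hstep_lift : ∀ P Q : Finset {v : V // v ≠ T.root}, PebStep T' P Q →
        PebStep T (liftF T P) (liftF T Q) := fun P Q hPQ => step_lift T T' hparent hT.1 hPQ
    have Rlift : ReachB T k ∅ (liftF T Pstar) := by
      have := R1.map (m := k) (liftF T) hstep_lift
        (fun P hP => by rw [card_liftF]; omega)
      rwa [liftF_empty] at this
    have Rins : ReachB T k (insert T.root (liftF T Pstar)) {T.root} := by
      have := R2.map (m := k) (fun P => insert T.root (liftF T P))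
        (fun P Q hPQ => step_insert_notmem (root_not_mem_liftF T P) (root_not_mem_liftF T Q)
          (hstep_lift P Q hPQ))
        (fun P hP => by
          show (insert T.root (liftF T P)).card ≤ k
          have h1 := Finset.card_insert_le T.root (liftF T P)
          rw [card_liftF] at h1
          omega)
      have he : insert T.root (liftF T (∅ : Finset {v : V // v ≠ T.root})) = {T.root} := by
        rw [liftF_empty]; rfl
      simpa only [he] using this
    have hcP : c ∈ liftF T Pstar := by
      have h1 : T'.root.val ∈ liftF T Pstar := Finset.mem_map_of_mem _ hPc
      rwa [hroot] at h1
    have hcardP : Pstar.card ≤ k - 1 :=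
      hcard Pstar (List.mem_append.mpr (Or.inr (List.mem_cons_self)))
    have Rstep : ReachB T k (liftF T Pstar) (insert T.root (liftF T Pstar)) := by
      refine ReachB.single ⟨T.root, Or.inl ⟨root_not_mem_liftF T Pstar, rfl⟩,
        fun u hu hp => ?_⟩ ?_ ?_
      · rw [huniq u hu hp]
        exact hcP
      · rw [card_liftF]; omega
      · have h1 := Finset.card_insert_le T.root (liftF T Pstar)
        rw [card_liftF] at h1
        omega
    obtain ⟨L'', f1, f2, f3, f4, _⟩ := (Rlift.trans Rstep).trans' Rins
    exact Nat.sInf_le ⟨L'', ⟨f1, f2, f3⟩, pebSpace_le_iff.mpr f4⟩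
end

section
/- There exist two finite directed acyclic graphs G₁ and G₂, each with a unique sink, such that the underlying undirected graphs of G₁ and G₂ are isomorphic, but rev(G₁) ≠ rev(G₂). (Concretely, on vertex set {1,…,7}, the DAG G₁ with edges 2→1, 3→1, 4→1, 4→3, 5→4, 6→4, 7→4 has rev(G₁) = 5, while the DAG G₂ with edges 2→1, 3→1, 4→1, 3→4, 5→4, 6→4, 7→4 has rev(G₂) = 6.) -/
namespace DagProof

def adj1 (u v : Fin 7) : Prop :=
  ((u.val + 1, v.val + 1) ∈ [(2,1), (3,1), (4,1), (4,3), (5,4), (6,4), (7,4)])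

def adj2 (u v : Fin 7) : Prop :=
  ((u.val + 1, v.val + 1) ∈ [(2,1), (3,1), (4,1), (3,4), (5,4), (6,4), (7,4)])

instance : ∀ u v, Decidable (adj1 u v) := fun u v =>
  inferInstanceAs (Decidable ((u.val + 1, v.val + 1) ∈ [(2,1), (3,1), (4,1), (4,3), (5,4), (6,4), (7,4)]))
instance : ∀ u v, Decidable (adj2 u v) := fun u v =>
  inferInstanceAs (Decidable ((u.val + 1, v.val + 1) ∈ [(2,1), (3,1), (4,1), (3,4), (5,4), (6,4), (7,4)]))

def G1 : DagSys (Fin 7) := ⟨adj1, 0⟩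
def G2 : DagSys (Fin 7) := ⟨adj2, 0⟩

instance : ∀ u v, Decidable (G1.adj u v) := fun u v => inferInstanceAs (Decidable (adj1 u v))
instance : ∀ u v, Decidable (G2.adj u v) := fun u v => inferInstanceAs (Decidable (adj2 u v))

instance : ∀ P Q : Finset (Fin 7), Decidable (DagPebStep G1 P Q) := fun P Q =>
  inferInstanceAs (Decidable (∃ v : Fin 7, ((v ∉ P ∧ Q = insert v P) ∨ (v ∉ Q ∧ P = insert v Q)) ∧
    ∀ u : Fin 7, G1.adj u v → u ∈ P))

instance : ∀ P Q : Finset (Fin 7), Decidable (DagPebStep G2 P Q) := fun P Q =>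
  inferInstanceAs (Decidable (∃ v : Fin 7, ((v ∉ P ∧ Q = insert v P) ∨ (v ∉ Q ∧ P = insert v Q)) ∧
    ∀ u : Fin 7, G2.adj u v → u ∈ P))

def chain'b {α : Type} (r : α → α → Bool) : List α → Bool
  | [] => true
  | [_] => true
  | a :: b :: t => r a b && chain'b r (b :: t)

lemma chain'b_iff {α : Type} (R : α → α → Prop) [DecidableRel R] :
    ∀ L : List α, chain'b (fun a b => decide (R a b)) L = true ↔ L.Chain' R
  | [] => by simp [chain'b, List.Chain']
  | [a] => by simp [chain'b, List.Chain']
  | a :: b :: t => by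
      rw [List.Chain', List.isChain_cons_cons]
      simp only [chain'b, Bool.and_eq_true, decide_eq_true_iff]
      rw [chain'b_iff R (b :: t)]
      rfl

instance (priority := 2000) decChain' {α : Type} (R : α → α → Prop) [DecidableRel R]
    (L : List α) : Decidable (L.Chain' R) :=
  decidable_of_iff _ (chain'b_iff R L)

instance : ∀ L : List (Finset (Fin 7)), Decidable (IsDagPebbling G1 L) := fun L =>
  inferInstanceAs (Decidable (L.head? = some ∅ ∧ L.getLast? = some {G1.root} ∧
    L.Chain' (DagPebStep G1)))

instance : ∀ L : List (Finset (Fin 7)), Decidable (IsDagPebbling G2 L) := fun L =>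
  inferInstanceAs (Decidable (L.head? = some ∅ ∧ L.getLast? = some {G2.root} ∧
    L.Chain' (DagPebStep G2)))

lemma acyclic_of_rank {V : Type} (G : DagSys V) (f : V → ℕ)
    (h : ∀ u v, G.adj u v → f v < f u) : ∀ v, ¬ Relation.TransGen G.adj v v := by
  have key : ∀ a b, Relation.TransGen G.adj a b → f b < f a := by
    intro a b hab
    induction hab with
    | single h1 => exact h _ _ h1
    | tail _ h1 ih => exact lt_trans (h _ _ h1) ih
  exact fun v hv => lt_irrefl _ (key v v hv)

lemma mem_card_le_space {V : Type} (L : List (Finset V)) :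
    ∀ P ∈ L, P.card ≤ dagPebSpace L := by
  induction L with
  | nil => intro P h; simp at h
  | cons a t ih =>
    intro P hP
    rcases List.mem_cons.mp hP with rfl | hP
    · exact le_max_left _ _
    · exact le_trans (ih P hP) (le_max_right _ _)

lemma chain_inv {α : Type} (R : α → α → Prop) (S C : α → Prop)
    (h : ∀ P Q, S P → C Q → R P Q → S Q) :
    ∀ L : List α, L.Chain' R → (∀ b ∈ L, C b) → ∀ a, L.head? = some a → S a →
      ∀ b, L.getLast? = some b → S b := by
  intro L
  induction L with
  | nil => intro _ _ a ha; simp at ha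
  | cons x t ih =>
    intro hch hC a ha hSa b hb
    simp only [List.head?_cons, Option.some.injEq] at ha
    subst ha
    cases t with
    | nil =>
      simp only [List.getLast?_singleton, Option.some.injEq] at hb
      subst hb; exact hSa
    | cons y t2 =>
      rw [List.Chain', List.isChain_cons_cons] at hch
      have hSy : S y := h _ _ hSa (hC y (by simp)) hch.1
      have hb2 : (y :: t2).getLast? = some b := by
        rwa [List.getLast?_cons_cons] at hb
      exact ih hch.2 (fun c hc => hC c (List.mem_cons_of_mem _ hc)) y rfl hSy b hb2

def S1 : List (Finset (Fin 7)) := [(∅ : Finset (Fin 7)), {1}, {3}, {4}, {5}, {6}, {0,3}, {1,3}, {1,4}, {1,5}, {1,6}, {2,3}, {3,4}, {3,5}, {3,6}, {4,5}, {4,6}, {5,6}, {0,1,3}, {0,2,3}, {0,3,4}, {0,3,5}, {0,3,6}, {1,2,3}, {1,3,4}, {1,3,5}, {1,3,6}, {1,4,5}, {1,4,6}, {1,5,6}, {2,3,4}, {2,3,5}, {2,3,6}, {3,4,5}, {3,4,6}, {3,5,6}, {4,5,6}, {0,1,2,3}, {0,1,3,4}, {0,1,3,5}, {0,1,3,6},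 {0,2,3,4}, {0,2,3,5}, {0,2,3,6}, {0,3,4,5}, {0,3,4,6}, {0,3,5,6}, {1,2,3,4}, {1,2,3,5}, {1,2,3,6}, {1,3,4,5}, {1,3,4,6}, {1,3,5,6}, {1,4,5,6}, {2,3,4,5}, {2,3,4,6}, {2,3,5,6}, {3,4,5,6}]

def S2 : List (Finset (Fin 7)) := [(∅ : Finset (Fin 7)), {1}, {2}, {3}, {4}, {5}, {6}, {0,3}, {1,2}, {1,3}, {1,4}, {1,5}, {1,6}, {2,3}, {2,4}, {2,5}, {2,6}, {3,4}, {3,5}, {3,6}, {4,5}, {4,6}, {5,6}, {0,1,3}, {0,2,3}, {0,3,4}, {0,3,5}, {0,3,6}, {1,2,3}, {1,2,4}, {1,2,5}, {1,2,6}, {1,3,4}, {1,3,5}, {1,3,6}, {1,4,5}, {1,4,6}, {1,5,6}, {2,3,4}, {2,3,5}, {2,3,6}, {2,4,5}, {2,4,6}, {2,5,6}, {3,4,5}, {3,4,6}, {3,5,6}, {4,5,6}, {0,1,2,3}, {0,1,3,4}, {0,1,3,5}, {0,1,3,6}, {0,2,3,4}, {0,2,3,5}, {0,2,3,6}, {0,3,4,5},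 {0,3,4,6}, {0,3,5,6}, {1,2,3,4}, {1,2,3,5}, {1,2,3,6}, {1,2,4,5}, {1,2,4,6}, {1,2,5,6}, {1,3,4,5}, {1,3,4,6}, {1,3,5,6}, {1,4,5,6}, {2,3,4,5}, {2,3,4,6}, {2,3,5,6}, {2,4,5,6}, {3,4,5,6}, {0,1,2,3,4}, {0,1,2,3,5}, {0,1,2,3,6}, {0,1,3,4,5}, {0,1,3,4,6}, {0,1,3,5,6}, {0,2,3,4,5}, {0,2,3,4,6}, {0,2,3,5,6}, {0,3,4,5,6}, {1,2,3,4,5}, {1,2,3,4,6}, {1,2,3,5,6}, {1,2,4,5,6}, {1,3,4,5,6}, {2,3,4,5,6}]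

lemma closed_of_step {G : DagSys (Fin 7)} {S : List (Finset (Fin 7))} {k : ℕ}
    (h : ∀ P ∈ S, ∀ v : Fin 7, (∀ u, G.adj u v → u ∈ P) →
        ((insert v P).card ≤ k → insert v P ∈ S) ∧ P.erase v ∈ S) :
    ∀ P ∈ S, ∀ Q : Finset (Fin 7), Q.card ≤ k → DagPebStep G P Q → Q ∈ S := by
  rintro P hP Q hQk ⟨v, hcases, hpre⟩
  rcases hcases with ⟨hv, rfl⟩ | ⟨hv, rfl⟩
  · exact (h P hP v hpre).1 hQk
  · have he : (insert v Q).erase v = Q := Finset.erase_insert hv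
    rw [← he]
    exact (h _ hP v hpre).2

set_option maxRecDepth 100000 in
set_option maxHeartbeats 2000000 in
lemma S1_step : ∀ P ∈ S1, ∀ v : Fin 7, (∀ u, G1.adj u v → u ∈ P) →
    ((insert v P).card ≤ 4 → insert v P ∈ S1) ∧ P.erase v ∈ S1 := by decide

set_option maxRecDepth 100000 in
set_option maxHeartbeats 2000000 in
lemma S2_step : ∀ P ∈ S2, ∀ v : Fin 7, (∀ u, G2.adj u v → u ∈ P) →
    ((insert v P).card ≤ 5 → insert v P ∈ S2) ∧ P.erase v ∈ S2 := by decide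

lemma S1_closed : ∀ P ∈ S1, ∀ Q : Finset (Fin 7),
    Q.card ≤ 4 → DagPebStep G1 P Q → Q ∈ S1 := closed_of_step S1_step

lemma S2_closed : ∀ P ∈ S2, ∀ Q : Finset (Fin 7),
    Q.card ≤ 5 → DagPebStep G2 P Q → Q ∈ S2 := closed_of_step S2_step

lemma lower_bound {G : DagSys (Fin 7)} {S : List (Finset (Fin 7))} {k : ℕ}
    (hcl : ∀ P ∈ S, ∀ Q : Finset (Fin 7), Q.card ≤ k → DagPebStep G P Q → Q ∈ S)
    (hemp : (∅ : Finset (Fin 7)) ∈ S) (hroot : ({G.root} : Finset (Fin 7)) ∉ S) :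
    ∀ L : List (Finset (Fin 7)), IsDagPebbling G L → ¬ (dagPebSpace L ≤ k) := by
  intro L hL hsp
  obtain ⟨hh, hl, hch⟩ := hL
  have hbound : ∀ P ∈ L, P.card ≤ k := fun P hP =>
    le_trans (mem_card_le_space L P hP) hsp
  exact hroot (chain_inv (DagPebStep G) (· ∈ S) (fun Q => Q.card ≤ k)
    (fun P Q hPS hQk hst => hcl P hPS Q hQk hst) L hch hbound _ hh hemp _ hl)

def L1 : List (Finset (Fin 7)) := [(∅ : Finset (Fin 7)), {4}, {4,5}, {4,5,6}, {3,4,5,6}, {3,5,6}, {3,6}, {3}, {2,3}, {1,2,3}, {0,1,2,3}, {0,2,3}, {0,3}, {0,3,4}, {0,3,4,5}, {0,3,4,5,6}, {0,4,5,6}, {0,5,6}, {0,6}, {0}]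

def L2 : List (Finset (Fin 7)) := [(∅ : Finset (Fin 7)), {2}, {2,4}, {2,4,5}, {2,4,5,6}, {2,3,4,5,6}, {2,3,4,5}, {2,3,4}, {2,3}, {1,2,3}, {0,1,2,3}, {0,2,3}, {0,2,3,4}, {0,2,3,4,5}, {0,2,3,4,5,6}, {0,2,4,5,6}, {0,4,5,6}, {0,5,6}, {0,6}, {0}]

set_option maxRecDepth 100000 in
set_option maxHeartbeats 2000000 in
lemma L1_ok : IsDagPebbling G1 L1 ∧ dagPebSpace L1 ≤ 5 := by decide

set_option maxRecDepth 100000 in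
set_option maxHeartbeats 2000000 in
lemma L2_ok : IsDagPebbling G2 L2 ∧ dagPebSpace L2 ≤ 6 := by decide

lemma rev_eq {G : DagSys (Fin 7)} {S : List (Finset (Fin 7))} {k : ℕ} {L : List (Finset (Fin 7))}
    (hcl : ∀ P ∈ S, ∀ Q : Finset (Fin 7), Q.card ≤ k → DagPebStep G P Q → Q ∈ S)
    (hemp : (∅ : Finset (Fin 7)) ∈ S) (hroot : ({G.root} : Finset (Fin 7)) ∉ S)
    (hL : IsDagPebbling G L) (hsp : dagPebSpace L ≤ k + 1) :
    dagRevNum G = k + 1 := by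
  have hmem : k + 1 ∈ {m | ∃ L : List (Finset (Fin 7)), IsDagPebbling G L ∧ dagPebSpace L ≤ m} :=
    ⟨L, hL, hsp⟩
  refine le_antisymm (Nat.sInf_le hmem) ?_
  refine le_csInf ⟨k + 1, hmem⟩ ?_
  rintro m ⟨L2, hL2, hsp2⟩
  by_contra hlt
  push_neg at hlt
  exact lower_bound hcl hemp hroot L2 hL2 (le_trans hsp2 (Nat.lt_succ_iff.mp hlt))

end DagProof

/-- There are two finite DAGs, each with a unique sink, whose
underlying undirected graphs coincide (in particular are isomorphic), but
whose persistent reversible pebbling numbers differ.  Concretely, on the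
vertex set `{1, …, 7}` (encoded as `Fin 7` with vertex `i` encoded as `i - 1`),
the DAG `G₁` with edges `2→1, 3→1, 4→1, 4→3, 5→4, 6→4, 7→4` has `rev(G₁) = 5`,
while the DAG `G₂` with edges `2→1, 3→1, 4→1, 3→4, 5→4, 6→4, 7→4` has
`rev(G₂) = 6`. -/



theorem exists_dags_same_undirected_different_rev :
    ∃ G₁ G₂ : DagSys (Fin 7),
      IsRootedDAG G₁ ∧ IsRootedDAG G₂ ∧
      G₁.root = 0 ∧ G₂.root = 0 ∧
      (∀ u v : Fin 7, G₁.adj u v ↔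
        ((u.val + 1, v.val + 1) ∈
          [(2,1), (3,1), (4,1), (4,3), (5,4), (6,4), (7,4)])) ∧
      (∀ u v : Fin 7, G₂.adj u v ↔
        ((u.val + 1, v.val + 1) ∈
          [(2,1), (3,1), (4,1), (3,4), (5,4), (6,4), (7,4)])) ∧
      (∀ u v : Fin 7, (G₁.adj u v ∨ G₁.adj v u) ↔ (G₂.adj u v ∨ G₂.adj v u)) ∧
      dagRevNum G₁ = 5 ∧ dagRevNum G₂ = 6 ∧ dagRevNum G₁ ≠ dagRevNum G₂ := by
  refine ⟨DagProof.G1, DagProof.G2, ?_, ?_, rfl, rfl, fun u v => Iff.rfl, fun u v => Iff.rfl, ?_, ?_, ?_, ?_⟩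
  · constructor
    · exact DagProof.acyclic_of_rank _ (fun v => v.val) (by decide)
    · decide
  · constructor
    · exact DagProof.acyclic_of_rank _
        (fun v => if v = 0 then 0 else if v = 3 then 1 else 2) (by decide)
    · decide
  · decide
  · exact DagProof.rev_eq DagProof.S1_closed (by decide) (by decide)
      DagProof.L1_ok.1 DagProof.L1_ok.2
  · exact DagProof.rev_eq DagProof.S2_closed (by decide) (by decide)
      DagProof.L2_ok.1 DagProof.L2_ok.2
  · intro h
    rw [DagProof.rev_eq DagProof.S1_closed (by decide) (by decide)
      DagProof.L1_ok.1 DagProof.L1_ok.2,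
      DagProof.rev_eq DagProof.S2_closed (by decide) (by decide)
      DagProof.L2_ok.1 DagProof.L2_ok.2] at h
    exact absurd h (by norm_num)
end
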